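/- arXiv:2001.02373 — 3 statements merged into one kernel-verified Lean document; each statement's English description precedes it below -/
import Mathlib

section
/- Let $T^3$ be a tri-tree with tensor-product weight $w = w_1 \otimes w_2 \otimes w_3 \geq 0$, and let $f : T^3 \to [0,\infty)$ be superadditive in each parameter separately with $\operatorname{supp} f \subseteq \{ \mathbf{I}(wf) \leq \delta \}$. Then for every $\lambda > 0$, $\sum_{T^3} w\, \big( I_1(w_1 f) \cdot I_2 I_3(w_2 w_3 f) \big)^2 \, \mathbf{1}_{\{\mathbf{I}(wf) \leq \lambda\}} \leq 2\, \delta \lambda \sum_{T^3} w f^2$. -/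
open Finset
open scoped Classical

/-- A tree order: the set of elements above any given element is totally ordered. -/
def IsTreeOrder (T : Type*) [PartialOrder T] : Prop :=
  ∀ ω a b : T, ω ≤ a → ω ≤ b → a ≤ b ∨ b ≤ a

/-- The Hardy operator `I f α = ∑_{α' ≥ α} f α'`. -/
noncomputable def hI {T : Type*} [Fintype T] [PartialOrder T] (f : T → ℝ) (a : T) : ℝ :=
  ∑ b, if a ≤ b then f b else 0

/-- The adjoint Hardy operator `I* f β = ∑_{α ≤ β} f α`. -/
noncomputable def hIstar {T : Type*} [Fintype T] [PartialOrder T] (f : T → ℝ) (b : T) : ℝ :=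
  ∑ a, if a ≤ b then f a else 0

/-- `b` is a child of `β`: a maximal element of the set of elements strictly below `β`. -/
def IsChild {T : Type*} [PartialOrder T] (b β : T) : Prop :=
  b < β ∧ ∀ c, b < c → c < β → False

/-- The difference operator `Δ f β = f β - ∑_{β' ∈ ch β} f β'`. -/
noncomputable def hDelta {T : Type*} [Fintype T] [PartialOrder T] (f : T → ℝ) (β : T) : ℝ :=
  f β - ∑ b, if IsChild b β then f b else 0

/-- A superadditive function on a tree: `f β ≥ ∑_{β' ∈ ch β} f β'` for all `β`. -/
def Superadd {T : Type*} [Fintype T] [PartialOrder T] (f : T → ℝ) : Prop :=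
  ∀ β : T, (∑ b, if IsChild b β then f b else 0) ≤ f β

/-- The Hardy operator acting in the first coordinate of a tri-tree. -/
noncomputable def k1 {T1 T2 T3 : Type*} [Fintype T1] [PartialOrder T1]
    (f : T1 × T2 × T3 → ℝ) (a : T1 × T2 × T3) : ℝ :=
  ∑ b : T1, if a.1 ≤ b then f (b, a.2.1, a.2.2) else 0

/-- The Hardy operator acting in the second coordinate of a tri-tree. -/
noncomputable def k2 {T1 T2 T3 : Type*} [Fintype T2] [PartialOrder T2]
    (f : T1 × T2 × T3 → ℝ) (a : T1 × T2 × T3) : ℝ :=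
  ∑ b : T2, if a.2.1 ≤ b then f (a.1, b, a.2.2) else 0

/-- The Hardy operator acting in the third coordinate of a tri-tree. -/
noncomputable def k3 {T1 T2 T3 : Type*} [Fintype T3] [PartialOrder T3]
    (f : T1 × T2 × T3 → ℝ) (a : T1 × T2 × T3) : ℝ :=
  ∑ b : T3, if a.2.2 ≤ b then f (a.1, a.2.1, b) else 0

/-- Superadditivity in the first parameter separately. -/
def SuperaddT1 {T1 T2 T3 : Type*} [Fintype T1] [PartialOrder T1]
    (f : T1 × T2 × T3 → ℝ) : Prop :=
  ∀ (β : T1) (a2 : T2) (a3 : T3),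
    (∑ b, if IsChild b β then f (b, a2, a3) else 0) ≤ f (β, a2, a3)

/-- Superadditivity in the second parameter separately. -/
def SuperaddT2 {T1 T2 T3 : Type*} [Fintype T2] [PartialOrder T2]
    (f : T1 × T2 × T3 → ℝ) : Prop :=
  ∀ (a1 : T1) (β : T2) (a3 : T3),
    (∑ b, if IsChild b β then f (a1, b, a3) else 0) ≤ f (a1, β, a3)

/-- Superadditivity in the third parameter separately. -/
def SuperaddT3 {T1 T2 T3 : Type*} [Fintype T3] [PartialOrder T3]
    (f : T1 × T2 × T3 → ℝ) : Prop :=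
  ∀ (a1 : T1) (a2 : T2) (β : T3),
    (∑ b, if IsChild b β then f (a1, a2, b) else 0) ≤ f (a1, a2, β)

section SingleTree
variable {T : Type*} [Fintype T] [PartialOrder T]

lemma chain_sq (h : IsTreeOrder T) (g : T → ℝ) (hg : ∀ x, 0 ≤ g x) (α : T) :
    (∑ b, if α ≤ b then g b else 0)^2
      ≤ 2 * ∑ b, if α ≤ b then g b * ∑ c, if b ≤ c then g c else 0 else 0 := by
  have expand : (∑ b, if α ≤ b then g b else 0)^2
      = ∑ b, ∑ c, (if α ≤ b then g b else 0) * (if α ≤ c then g c else 0) := by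
    rw [sq, Finset.sum_mul_sum]
  have hsum : ∀ b : T, (∑ c, if α ≤ b ∧ b ≤ c then g b * g c else 0)
      = if α ≤ b then g b * ∑ c, if b ≤ c then g c else 0 else 0 := by
    intro b
    by_cases hb : α ≤ b
    · simp only [hb, true_and, if_true, Finset.mul_sum]
      exact Finset.sum_congr rfl fun c _ => by by_cases hc : b ≤ c <;> simp [hc]
    · simp [hb]
  rw [expand]
  have nn : ∀ (P : Prop) [Decidable P] (x y : T), (0:ℝ) ≤ if P then g x * g y else 0 := by
    intro P _ x y
    split
    · exact mul_nonneg (hg x) (hg y)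
    · exact le_refl 0
  have step : ∀ b c : T, (if α ≤ b then g b else 0) * (if α ≤ c then g c else 0)
      ≤ (if α ≤ b ∧ b ≤ c then g b * g c else 0) + (if α ≤ c ∧ c ≤ b then g c * g b else 0) := by
    intro b c
    by_cases hb : α ≤ b
    · by_cases hc : α ≤ c
      · rcases h α b c hb hc with hbc | hcb
        · have h1 : (if α ≤ b ∧ b ≤ c then g b * g c else 0) = g b * g c := if_pos ⟨hb, hbc⟩
          have h2 : (0:ℝ) ≤ (if α ≤ c ∧ c ≤ b then g c * g b else 0) := nn _ _ _
          rw [if_pos hb, if_pos hc, h1]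
          exact le_add_of_nonneg_right h2
        · have h1 : (if α ≤ c ∧ c ≤ b then g c * g b else 0) = g c * g b := if_pos ⟨hc, hcb⟩
          have h2 : (0:ℝ) ≤ (if α ≤ b ∧ b ≤ c then g b * g c else 0) := nn _ _ _
          rw [if_pos hb, if_pos hc, h1]
          linarith [mul_comm (g b) (g c)]
      · rw [if_neg hc, mul_zero]
        have h2 : (0:ℝ) ≤ (if α ≤ b ∧ b ≤ c then g b * g c else 0) := nn _ _ _
        have h3 : (0:ℝ) ≤ (if α ≤ c ∧ c ≤ b then g c * g b else 0) := nn _ _ _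
        exact add_nonneg h2 h3
    · rw [if_neg hb, zero_mul]
      have h2 : (0:ℝ) ≤ (if α ≤ b ∧ b ≤ c then g b * g c else 0) := nn _ _ _
      have h3 : (0:ℝ) ≤ (if α ≤ c ∧ c ≤ b then g c * g b else 0) := nn _ _ _
      exact add_nonneg h2 h3
  calc ∑ b, ∑ c, (if α ≤ b then g b else 0) * (if α ≤ c then g c else 0)
      ≤ ∑ b, ∑ c, ((if α ≤ b ∧ b ≤ c then g b * g c else 0)
          + (if α ≤ c ∧ c ≤ b then g c * g b else 0)) :=
        Finset.sum_le_sum fun b _ => Finset.sum_le_sum fun c _ => step b c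
    _ = (∑ b, ∑ c, (if α ≤ b ∧ b ≤ c then g b * g c else 0))
          + ∑ b, ∑ c, (if α ≤ c ∧ c ≤ b then g c * g b else 0) := by
        rw [← Finset.sum_add_distrib]
        exact Finset.sum_congr rfl fun b _ => by rw [← Finset.sum_add_distrib]
    _ = (∑ b, ∑ c, (if α ≤ b ∧ b ≤ c then g b * g c else 0))
          + ∑ b, ∑ c, (if α ≤ b ∧ b ≤ c then g b * g c else 0) := by
        congr 1
        rw [Finset.sum_comm]
    _ = 2 * ∑ b, ∑ c, (if α ≤ b ∧ b ≤ c then g b * g c else 0) := by ring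
    _ = 2 * ∑ b, if α ≤ b then g b * ∑ c, if b ≤ c then g c else 0 else 0 := by
        congr 1
        exact Finset.sum_congr rfl fun b _ => hsum b

lemma exists_child (h : IsTreeOrder T) {β γ : T} (hβ : β < γ) :
    ∃ c, IsChild c γ ∧ β ≤ c := by
  classical
  have hne : (Finset.univ.filter (fun x => β ≤ x ∧ x < γ)).Nonempty :=
    ⟨β, by simp [le_refl, hβ]⟩
  obtain ⟨m, hm, hmax⟩ : ∃ m ∈ Finset.univ.filter (fun x => β ≤ x ∧ x < γ),
      ∀ x ∈ Finset.univ.filter (fun x => β ≤ x ∧ x < γ), ¬ m < x := by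
    obtain ⟨m, hm⟩ := Finset.exists_maximal hne
    exact ⟨m, hm.1, fun x hx hlt => lt_irrefl m (lt_of_lt_of_le hlt (hm.2 hx hlt.le))⟩
  simp only [Finset.mem_filter, Finset.mem_univ, true_and] at hm
  refine ⟨m, ⟨hm.2, fun c hc1 hc2 => ?_⟩, hm.1⟩
  have : c ∈ Finset.univ.filter (fun x => β ≤ x ∧ x < γ) := by
    simp [le_trans hm.1 (le_of_lt hc1), hc2]
  exact hmax c this hc1

lemma child_unique (h : IsTreeOrder T) {β c c' γ : T}
    (hc : IsChild c γ) (hc' : IsChild c' γ) (hb : β ≤ c) (hb' : β ≤ c') : c = c' := by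
  rcases h β c c' hb hb' with hle | hle
  · rcases lt_or_eq_of_le hle with hlt | heq
    · exact absurd (hc.2 c') (fun hcon => hcon hlt hc'.1)
    · exact heq
  · rcases lt_or_eq_of_le hle with hlt | heq
    · exact absurd (hc'.2 c) (fun hcon => hcon hlt hc.1)
    · exact heq.symm

lemma child_le_iff (h : IsTreeOrder T) {c γ : T} (hc : IsChild c γ) (b : T) :
    c ≤ b ↔ b = c ∨ γ ≤ b := by
  constructor
  · intro hcb
    by_cases hbc : b = c
    · exact Or.inl hbc
    · right
      have hlt : c < b := lt_of_le_of_ne hcb (fun hh => hbc hh.symm)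
      rcases h c b γ (le_of_lt hlt) (le_of_lt hc.1) with hle | hle
      · rcases lt_or_eq_of_le hle with hlt2 | heq
        · exact absurd (hc.2 b) (fun hcon => hcon hlt hlt2)
        · exact le_of_eq heq.symm
      · exact hle
  · rintro (rfl | hgb)
    · exact le_refl _
    · exact le_trans (le_of_lt hc.1) hgb

/-- For `c` a child of `γ`, the up-set sum at `c` equals term at `c` plus up-set sum at `γ`. -/
lemma upsum_child (h : IsTreeOrder T) {c γ : T} (hc : IsChild c γ) (t : T → ℝ) :
    (∑ b, if c ≤ b then t b else 0) = t c + ∑ b, if γ ≤ b then t b else 0 := by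
  have hpt : ∀ b : T, (if c ≤ b then t b else 0)
      = (if b = c then t b else 0) + (if γ ≤ b then t b else 0) := by
    intro b
    by_cases hbc : b = c
    · subst hbc
      have hng : ¬ γ ≤ b := fun hh => absurd (lt_of_lt_of_le hc.1 hh) (lt_irrefl _)
      simp [hng]
    · by_cases hgb : γ ≤ b
      · have : c ≤ b := (child_le_iff h hc b).2 (Or.inr hgb)
        simp [this, hbc, hgb]
      · have : ¬ c ≤ b := fun hh => by
          rcases (child_le_iff h hc b).1 hh with h1 | h2
          exacts [hbc h1, hgb h2]
        simp [this, hbc, hgb]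
  rw [Finset.sum_congr rfl (fun b _ => hpt b), Finset.sum_add_distrib]
  congr 1
  simp

/-- Split a down-set sum at `γ` into the term at `γ` plus the strict part. -/
lemma downsum_split (γ : T) (t : T → ℝ) :
    (∑ b, if b ≤ γ then t b else 0) = t γ + ∑ b, if b < γ then t b else 0 := by
  have hpt : ∀ b : T, (if b ≤ γ then t b else 0)
      = (if b = γ then t b else 0) + (if b < γ then t b else 0) := by
    intro b
    by_cases hbc : b = γ
    · subst hbc; simp [lt_irrefl]
    · by_cases hlt : b ≤ γ
      · simp [hbc, hlt, lt_of_le_of_ne hlt hbc]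
      · have : ¬ b < γ := fun hh => hlt (le_of_lt hh)
        simp [hbc, hlt, this]
  rw [Finset.sum_congr rfl (fun b _ => hpt b), Finset.sum_add_distrib]
  congr 1
  simp

/-- The strict down-set sum partitions through the children. -/
lemma downsum_children (h : IsTreeOrder T) (γ : T) (t : T → ℝ) :
    (∑ b, if b < γ then t b else 0)
      = ∑ c, if IsChild c γ then (∑ b, if b ≤ c then t b else 0) else 0 := by
  have rhs_eq : ∀ c : T, (if IsChild c γ then (∑ b, if b ≤ c then t b else 0) else 0)
      = ∑ b, if IsChild c γ ∧ b ≤ c then t b else 0 := by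
    intro c
    by_cases hcγ : IsChild c γ
    · rw [if_pos hcγ]
      exact Finset.sum_congr rfl fun b _ => by by_cases hb : b ≤ c <;> simp [hcγ, hb]
    · rw [if_neg hcγ]
      symm
      exact Finset.sum_eq_zero fun b _ => by simp [hcγ]
  rw [Finset.sum_congr rfl (fun c _ => rhs_eq c), Finset.sum_comm]
  refine Finset.sum_congr rfl fun b _ => ?_
  by_cases hb : b < γ
  · obtain ⟨c₀, hc₀, hbc₀⟩ := exists_child h hb
    rw [if_pos hb]
    rw [Finset.sum_eq_single c₀]
    · rw [if_pos ⟨hc₀, hbc₀⟩]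
    · intro c _ hne
      rw [if_neg]
      rintro ⟨hcc, hbcc⟩
      exact hne (child_unique h hcc hc₀ hbcc hbc₀)
    · intro hmem; exact absurd (Finset.mem_univ c₀) hmem
  · rw [if_neg hb]
    symm
    refine Finset.sum_eq_zero fun c _ => ?_
    rw [if_neg]
    rintro ⟨hcc, hbcc⟩
    exact hb (lt_of_le_of_lt hbcc hcc.1)

lemma upsum_split (γ : T) (t : T → ℝ) :
    (∑ b, if γ ≤ b then t b else 0) = t γ + ∑ b, if γ < b then t b else 0 := by
  have hpt : ∀ b : T, (if γ ≤ b then t b else 0)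
      = (if b = γ then t b else 0) + (if γ < b then t b else 0) := by
    intro b
    by_cases hbc : b = γ
    · subst hbc; simp [lt_irrefl]
    · by_cases hlt : γ ≤ b
      · simp [hbc, hlt, lt_of_le_of_ne hlt (fun hh => hbc hh.symm)]
      · have h2 : ¬ γ < b := fun hh => hlt (le_of_lt hh)
        simp [hbc, hlt, h2]
  rw [Finset.sum_congr rfl (fun b _ => hpt b), Finset.sum_add_distrib]
  congr 1
  simp

lemma key_aux (h : IsTreeOrder T) (w B φ : T → ℝ) (hw : ∀ x, 0 ≤ w x) (hB : ∀ x, 0 ≤ B x)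
    (hφ : ∀ x, 0 ≤ φ x) (hsa : Superadd φ) (μ : ℝ)
    (hs : ∀ β, φ β ≠ 0 → (∑ b, if β ≤ b then w b * B b else 0) ≤ μ) (γ : T) :
    (∑ β, if β ≤ γ then w β * φ β * B β else 0)
      ≤ max 0 (μ - (∑ b, if γ < b then w b * B b else 0)) * φ γ := by
  have wf : WellFounded ((· < ·) : T → T → Prop) := IsWellFounded.wf
  induction γ using WellFounded.induction wf with
  | _ γ IH =>
  set t : T → ℝ := fun β => w β * φ β * B β with ht
  have hEc : ∀ c : T, IsChild c γ →
      (∑ b, if c < b then w b * B b else 0) = (∑ b, if γ ≤ b then w b * B b else 0) := by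
    intro c hc
    have h1 := upsum_child h hc (fun b => w b * B b)
    have h2 := upsum_split c (fun b => w b * B b)
    linarith
  have step1 : (∑ β, if β ≤ γ then t β else 0)
      = t γ + ∑ c, if IsChild c γ then (∑ β, if β ≤ c then t β else 0) else 0 := by
    rw [downsum_split, downsum_children h]
  have hFγ : (∑ b, if γ ≤ b then w b * B b else 0)
      = w γ * B γ + ∑ b, if γ < b then w b * B b else 0 := upsum_split γ _
  have hEnn : (0:ℝ) ≤ ∑ b, if γ < b then w b * B b else 0 := by
    refine Finset.sum_nonneg fun b _ => ?_
    split
    · exact mul_nonneg (hw b) (hB b)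
    · exact le_refl 0
  have step2 : (∑ c, if IsChild c γ then (∑ β, if β ≤ c then t β else 0) else 0)
      ≤ max 0 (μ - (∑ b, if γ ≤ b then w b * B b else 0)) * φ γ := by
    have hterm : ∀ c : T, (if IsChild c γ then (∑ β, if β ≤ c then t β else 0) else 0)
        ≤ max 0 (μ - (∑ b, if γ ≤ b then w b * B b else 0)) * (if IsChild c γ then φ c else 0) := by
      intro c
      by_cases hc : IsChild c γ
      · rw [if_pos hc, if_pos hc]
        have := IH c hc.1
        rw [hEc c hc] at this
        exact this
      · rw [if_neg hc, if_neg hc, mul_zero]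
    calc (∑ c, if IsChild c γ then (∑ β, if β ≤ c then t β else 0) else 0)
        ≤ ∑ c, max 0 (μ - (∑ b, if γ ≤ b then w b * B b else 0)) * (if IsChild c γ then φ c else 0) :=
          Finset.sum_le_sum fun c _ => hterm c
      _ = max 0 (μ - (∑ b, if γ ≤ b then w b * B b else 0)) * ∑ c, (if IsChild c γ then φ c else 0) := by
          rw [Finset.mul_sum]
      _ ≤ max 0 (μ - (∑ b, if γ ≤ b then w b * B b else 0)) * φ γ := by
          exact mul_le_mul_of_nonneg_left (hsa γ) (le_max_left 0 _)
  by_cases hφγ : φ γ = 0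
  · have htγ : t γ = 0 := by rw [ht]; simp [hφγ]
    rw [step1, htγ, zero_add, hφγ, mul_zero]
    calc (∑ c, if IsChild c γ then (∑ β, if β ≤ c then t β else 0) else 0)
        ≤ max 0 (μ - (∑ b, if γ ≤ b then w b * B b else 0)) * φ γ := step2
      _ = 0 := by rw [hφγ, mul_zero]
  · have hFμ := hs γ hφγ
    have hmax1 : max 0 (μ - (∑ b, if γ ≤ b then w b * B b else 0))
        = μ - (∑ b, if γ ≤ b then w b * B b else 0) := max_eq_right (by linarith)
    rw [step1]
    have : t γ + max 0 (μ - (∑ b, if γ ≤ b then w b * B b else 0)) * φ γ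
        ≤ max 0 (μ - (∑ b, if γ < b then w b * B b else 0)) * φ γ := by
      rw [hmax1]
      have hle : w γ * B γ * φ γ + (μ - (∑ b, if γ ≤ b then w b * B b else 0)) * φ γ
          = (μ - (∑ b, if γ < b then w b * B b else 0)) * φ γ := by
        rw [hFγ]; ring
      have h2 : (μ - (∑ b, if γ < b then w b * B b else 0))
          ≤ max 0 (μ - (∑ b, if γ < b then w b * B b else 0)) := le_max_right _ _
      have h3 : t γ = w γ * B γ * φ γ := by rw [ht]; ring
      rw [h3]
      calc w γ * B γ * φ γ + (μ - (∑ b, if γ ≤ b then w b * B b else 0)) * φ γ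
          = (μ - (∑ b, if γ < b then w b * B b else 0)) * φ γ := hle
        _ ≤ max 0 (μ - (∑ b, if γ < b then w b * B b else 0)) * φ γ :=
            mul_le_mul_of_nonneg_right h2 (hφ γ)
    linarith [step2]

lemma key (h : IsTreeOrder T) (w B φ : T → ℝ) (hw : ∀ x, 0 ≤ w x) (hB : ∀ x, 0 ≤ B x)
    (hφ : ∀ x, 0 ≤ φ x) (hsa : Superadd φ) (μ : ℝ) (hμ : 0 ≤ μ)
    (hs : ∀ β, φ β ≠ 0 → (∑ b, if β ≤ b then w b * B b else 0) ≤ μ) (γ : T) :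
    (∑ β, if β ≤ γ then w β * φ β * B β else 0) ≤ μ * φ γ := by
  have h1 := key_aux h w B φ hw hB hφ hsa μ hs γ
  have hEnn : (0:ℝ) ≤ ∑ b, if γ < b then w b * B b else 0 := by
    refine Finset.sum_nonneg fun b _ => ?_
    split
    · exact mul_nonneg (hw b) (hB b)
    · exact le_refl 0
  have h2 : max 0 (μ - (∑ b, if γ < b then w b * B b else 0)) ≤ μ :=
    max_le hμ (by linarith)
  calc (∑ β, if β ≤ γ then w β * φ β * B β else 0)
      ≤ max 0 (μ - (∑ b, if γ < b then w b * B b else 0)) * φ γ := h1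
    _ ≤ μ * φ γ := mul_le_mul_of_nonneg_right h2 (hφ γ)

end SingleTree

section Product
variable {T1 T2 T3 : Type*} [Fintype T1] [PartialOrder T1] [Fintype T2] [PartialOrder T2]
  [Fintype T3] [PartialOrder T3]

lemma ite_sum {ι : Type*} [Fintype ι] (P : Prop) [Decidable P] (g : ι → ℝ) :
    (if P then (∑ i, g i) else 0) = ∑ i, if P then g i else 0 := by
  split <;> simp

variable (w1 : T1 → ℝ) (w2 : T2 → ℝ) (w3 : T3 → ℝ) (f : T1 × T2 × T3 → ℝ)

/-- Curried version of `I₂I₃(w₂w₃ f)`. -/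
noncomputable def Bc (x : T1) (y : T2) (z : T3) : ℝ :=
  ∑ b2, if y ≤ b2 then (∑ b3, if z ≤ b3 then w2 b2 * w3 b3 * f (x, b2, b3) else 0) else 0

/-- Curried version of `I₁(w₁ f)`. -/
noncomputable def Ac (x : T1) (y : T2) (z : T3) : ℝ :=
  ∑ b1, if x ≤ b1 then w1 b1 * f (b1, y, z) else 0

/-- Curried version of `I(wf)` as `I₁(w₁ ⋅ Bc)`. -/
noncomputable def Fc (x : T1) (y : T2) (z : T3) : ℝ :=
  ∑ b1, if x ≤ b1 then w1 b1 * Bc w2 w3 f b1 y z else 0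

lemma hI_eq (a : T1 × T2 × T3) :
    hI (fun x => w1 x.1 * w2 x.2.1 * w3 x.2.2 * f x) a = Fc w1 w2 w3 f a.1 a.2.1 a.2.2 := by
  rw [hI]
  refine Eq.trans (Fintype.sum_prod_type _) ?_
  simp only [Fc]
  refine Finset.sum_congr rfl fun b1 _ => ?_
  refine Eq.trans (Fintype.sum_prod_type _) ?_
  by_cases hx : a.1 ≤ b1
  · rw [if_pos hx]
    simp only [Bc, Finset.mul_sum]
    refine Finset.sum_congr rfl fun b2 _ => ?_
    by_cases hy : a.2.1 ≤ b2
    · rw [if_pos hy, Finset.mul_sum]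
      refine Finset.sum_congr rfl fun b3 _ => ?_
      by_cases hz : a.2.2 ≤ b3
      · have hle : a ≤ (b1, b2, b3) := Prod.le_def.mpr ⟨hx, Prod.le_def.mpr ⟨hy, hz⟩⟩
        rw [if_pos hle, if_pos hz]
        show w1 b1 * w2 b2 * w3 b3 * f (b1, b2, b3) = w1 b1 * (w2 b2 * w3 b3 * f (b1, b2, b3))
        ring
      · have hle : ¬ a ≤ (b1, b2, b3) := fun hh => hz (Prod.le_def.mp (Prod.le_def.mp hh).2).2
        rw [if_neg hle, if_neg hz, mul_zero]
    · rw [if_neg hy, mul_zero]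
      refine Finset.sum_eq_zero fun b3 _ => ?_
      have hle : ¬ a ≤ (b1, b2, b3) := fun hh => hy (Prod.le_def.mp (Prod.le_def.mp hh).2).1
      rw [if_neg hle]
  · rw [if_neg hx]
    refine Finset.sum_eq_zero fun b2 _ => Finset.sum_eq_zero fun b3 _ => ?_
    have hle : ¬ a ≤ (b1, b2, b3) := fun hh => hx (Prod.le_def.mp hh).1
    rw [if_neg hle]

lemma ite_const_mul (P : Prop) [Decidable P] (c t : ℝ) :
    (if P then c * t else 0) = c * (if P then t else 0) := by
  split <;> simp

lemma ite_mul_right (P : Prop) [Decidable P] (c t : ℝ) :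
    (if P then c * t else 0) = (if P then c else 0) * t := by
  split <;> simp

lemma Bc_nonneg (hw2 : ∀ x, 0 ≤ w2 x) (hw3 : ∀ x, 0 ≤ w3 x) (hf : ∀ a, 0 ≤ f a)
    (x : T1) (y : T2) (z : T3) : 0 ≤ Bc w2 w3 f x y z := by
  refine Finset.sum_nonneg fun b2 _ => ?_
  split
  · refine Finset.sum_nonneg fun b3 _ => ?_
    split
    · exact mul_nonneg (mul_nonneg (hw2 b2) (hw3 b3)) (hf _)
    · exact le_refl 0
  · exact le_refl 0

lemma Ac_nonneg (hw1 : ∀ x, 0 ≤ w1 x) (hf : ∀ a, 0 ≤ f a)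
    (x : T1) (y : T2) (z : T3) : 0 ≤ Ac w1 f x y z := by
  refine Finset.sum_nonneg fun b1 _ => ?_
  split
  · exact mul_nonneg (hw1 b1) (hf _)
  · exact le_refl 0

lemma Bc_superadd (hw2 : ∀ x, 0 ≤ w2 x) (hw3 : ∀ x, 0 ≤ w3 x)
    (hs1 : SuperaddT1 f) (y : T2) (z : T3) :
    Superadd (fun x => Bc w2 w3 f x y z) := by
  intro β
  have step1 : ∀ b : T1, (if IsChild b β then Bc w2 w3 f b y z else 0)
      = ∑ b2, if y ≤ b2 then (∑ b3, if z ≤ b3 then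
          w2 b2 * w3 b3 * (if IsChild b β then f (b, b2, b3) else 0) else 0) else 0 := by
    intro b
    by_cases hb : IsChild b β
    · simp only [if_pos hb, Bc]
    · simp [hb, ite_self]
  rw [Finset.sum_congr rfl (fun b _ => step1 b), Finset.sum_comm]
  show _ ≤ Bc w2 w3 f β y z
  rw [Bc]
  refine Finset.sum_le_sum fun b2 _ => ?_
  by_cases hy : y ≤ b2
  · simp only [if_pos hy]
    rw [Finset.sum_comm]
    refine Finset.sum_le_sum fun b3 _ => ?_
    by_cases hz : z ≤ b3
    · simp only [if_pos hz]
      rw [← Finset.mul_sum]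
      exact mul_le_mul_of_nonneg_left (hs1 β b2 b3) (mul_nonneg (hw2 b2) (hw3 b3))
    · simp [hz]
  · simp [hy]

lemma Fc_child (h1 : IsTreeOrder T1) {c γ : T1} (hc : IsChild c γ) (y : T2) (z : T3) :
    Fc w1 w2 w3 f c y z = w1 c * Bc w2 w3 f c y z + Fc w1 w2 w3 f γ y z := by
  simp only [Fc]
  exact upsum_child h1 hc (fun b1 => w1 b1 * Bc w2 w3 f b1 y z)

lemma phi_superadd (h1 : IsTreeOrder T1) (hw1 : ∀ x, 0 ≤ w1 x) (hw2 : ∀ x, 0 ≤ w2 x)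
    (hw3 : ∀ x, 0 ≤ w3 x) (hf : ∀ a, 0 ≤ f a) (hs1 : SuperaddT1 f) (y : T2) (z : T3) (lam : ℝ) :
    Superadd (fun x => Bc w2 w3 f x y z * (if Fc w1 w2 w3 f x y z ≤ lam then (1:ℝ) else 0)) := by
  intro β
  show (∑ b, if IsChild b β then Bc w2 w3 f b y z *
      (if Fc w1 w2 w3 f b y z ≤ lam then (1:ℝ) else 0) else 0)
    ≤ Bc w2 w3 f β y z * (if Fc w1 w2 w3 f β y z ≤ lam then (1:ℝ) else 0)
  by_cases hβ : Fc w1 w2 w3 f β y z ≤ lam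
  · calc (∑ b, if IsChild b β then Bc w2 w3 f b y z *
          (if Fc w1 w2 w3 f b y z ≤ lam then (1:ℝ) else 0) else 0)
        ≤ ∑ b, if IsChild b β then Bc w2 w3 f b y z else 0 := by
          refine Finset.sum_le_sum fun b _ => ?_
          by_cases hb : IsChild b β
          · rw [if_pos hb, if_pos hb]
            by_cases hFb : Fc w1 w2 w3 f b y z ≤ lam
            · rw [if_pos hFb, mul_one]
            · rw [if_neg hFb, mul_zero]
              exact Bc_nonneg w2 w3 f hw2 hw3 hf b y z
          · rw [if_neg hb, if_neg hb]
      _ ≤ Bc w2 w3 f β y z := Bc_superadd w2 w3 f hw2 hw3 hs1 y z β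
      _ = Bc w2 w3 f β y z * (if Fc w1 w2 w3 f β y z ≤ lam then (1:ℝ) else 0) := by
          rw [if_pos hβ, mul_one]
  · rw [if_neg hβ, mul_zero]
    refine le_of_eq (Finset.sum_eq_zero fun b _ => ?_)
    by_cases hb : IsChild b β
    · rw [if_pos hb]
      have hFb : ¬ Fc w1 w2 w3 f b y z ≤ lam := by
        intro hle
        apply hβ
        have := Fc_child w1 w2 w3 f h1 hb y z
        have hnn : 0 ≤ w1 b * Bc w2 w3 f b y z :=
          mul_nonneg (hw1 b) (Bc_nonneg w2 w3 f hw2 hw3 hf b y z)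
        linarith
      rw [if_neg hFb, mul_zero]
    · rw [if_neg hb]

end Product

theorem stmt13 {T1 T2 T3 : Type*} [Fintype T1] [PartialOrder T1] [Fintype T2] [PartialOrder T2]
    [Fintype T3] [PartialOrder T3]
    (h1 : IsTreeOrder T1) (h2 : IsTreeOrder T2) (h3 : IsTreeOrder T3)
    (w1 : T1 → ℝ) (w2 : T2 → ℝ) (w3 : T3 → ℝ)
    (hw1 : ∀ x, 0 ≤ w1 x) (hw2 : ∀ x, 0 ≤ w2 x) (hw3 : ∀ x, 0 ≤ w3 x)
    (f : T1 × T2 × T3 → ℝ) (hf : ∀ a, 0 ≤ f a)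
    (hs1 : SuperaddT1 f) (hs2 : SuperaddT2 f) (hs3 : SuperaddT3 f) (δ : ℝ)
    (hsupp : ∀ a, f a ≠ 0 → hI (fun x => w1 x.1 * w2 x.2.1 * w3 x.2.2 * f x) a ≤ δ)
    (lam : ℝ) (hlam : 0 < lam) :
    ∑ a, w1 a.1 * w2 a.2.1 * w3 a.2.2 *
        (k1 (fun x => w1 x.1 * f x) a *
          k2 (k3 (fun x => w2 x.2.1 * w3 x.2.2 * f x)) a) ^ 2 *
        (if hI (fun x => w1 x.1 * w2 x.2.1 * w3 x.2.2 * f x) a ≤ lam then 1 else 0)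
      ≤ 2 * δ * lam * ∑ a, w1 a.1 * w2 a.2.1 * w3 a.2.2 * f a ^ 2 := by
  classical
  by_cases hftriv : ∀ a : T1 × T2 × T3, f a = 0
  · have hL : ∀ a : T1 × T2 × T3, w1 a.1 * w2 a.2.1 * w3 a.2.2 *
        (k1 (fun x => w1 x.1 * f x) a *
          k2 (k3 (fun x => w2 x.2.1 * w3 x.2.2 * f x)) a) ^ 2 *
        (if hI (fun x => w1 x.1 * w2 x.2.1 * w3 x.2.2 * f x) a ≤ lam then 1 else 0) = 0 := by
      intro a
      have hk : k1 (fun x => w1 x.1 * f x) a = 0 := by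
        rw [k1]
        refine Finset.sum_eq_zero fun b _ => ?_
        rw [hftriv]
        simp
      rw [hk]
      ring
    rw [Finset.sum_congr rfl fun a _ => hL a]
    have hR : ∀ a : T1 × T2 × T3, w1 a.1 * w2 a.2.1 * w3 a.2.2 * f a ^ 2 = 0 := by
      intro a; rw [hftriv]; ring
    rw [Finset.sum_congr rfl fun a _ => hR a]
    simp
  · push_neg at hftriv
    obtain ⟨a0, ha0⟩ := hftriv
    have hδ : 0 ≤ δ := by
      refine le_trans ?_ (hsupp a0 ha0)
      rw [hI]
      refine Finset.sum_nonneg fun b _ => ?_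
      split
      · exact mul_nonneg (mul_nonneg (mul_nonneg (hw1 _) (hw2 _)) (hw3 _)) (hf b)
      · exact le_refl 0
    have hBnn : ∀ (x : T1) (y : T2) (z : T3), 0 ≤ Bc w2 w3 f x y z :=
      Bc_nonneg w2 w3 f hw2 hw3 hf
    have hAnn : ∀ (x : T1) (y : T2) (z : T3), 0 ≤ Ac w1 f x y z :=
      Ac_nonneg w1 f hw1 hf
    have hχ01 : ∀ (x : T1) (y : T2) (z : T3),
        (0:ℝ) ≤ (if Fc w1 w2 w3 f x y z ≤ lam then (1:ℝ) else 0) ∧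
        (if Fc w1 w2 w3 f x y z ≤ lam then (1:ℝ) else 0) ≤ 1 := by
      intro x y z; constructor <;> (split <;> norm_num)
    -- the λ-estimate for the down-set sums (key lemma applied with φ = B·χ)
    have hD2 : ∀ (y : T2) (z : T3) (b1 : T1),
        (∑ β, if β ≤ b1 then w1 β * (Bc w2 w3 f β y z *
            (if Fc w1 w2 w3 f β y z ≤ lam then (1:ℝ) else 0)) * Bc w2 w3 f β y z else 0)
          ≤ lam * Bc w2 w3 f b1 y z := by
      intro y z b1
      have hsφ : ∀ β : T1, (Bc w2 w3 f β y z *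
          (if Fc w1 w2 w3 f β y z ≤ lam then (1:ℝ) else 0)) ≠ 0 →
          (∑ b, if β ≤ b then w1 b * Bc w2 w3 f b y z else 0) ≤ lam := by
        intro β hne
        by_cases hF : Fc w1 w2 w3 f β y z ≤ lam
        · exact hF
        · exfalso; apply hne; rw [if_neg hF, mul_zero]
      have hk := key h1 w1 (fun x => Bc w2 w3 f x y z)
        (fun x => Bc w2 w3 f x y z * (if Fc w1 w2 w3 f x y z ≤ lam then (1:ℝ) else 0))
        hw1 (fun x => hBnn x y z)
        (fun x => mul_nonneg (hBnn x y z) (hχ01 x y z).1)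
        (phi_superadd w1 w2 w3 f h1 hw1 hw2 hw3 hf hs1 y z lam) lam (le_of_lt hlam) hsφ b1
      refine le_trans hk ?_
      have hle : Bc w2 w3 f b1 y z * (if Fc w1 w2 w3 f b1 y z ≤ lam then (1:ℝ) else 0)
          ≤ Bc w2 w3 f b1 y z := by
        calc Bc w2 w3 f b1 y z * (if Fc w1 w2 w3 f b1 y z ≤ lam then (1:ℝ) else 0)
            ≤ Bc w2 w3 f b1 y z * 1 :=
              mul_le_mul_of_nonneg_left (hχ01 b1 y z).2 (hBnn b1 y z)
          _ = Bc w2 w3 f b1 y z := mul_one _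
      exact mul_le_mul_of_nonneg_left hle (le_of_lt hlam)
    -- the δ-estimate for the down-set sums (key lemma applied with φ = f)
    have hD1 : ∀ (y : T2) (z : T3) (γ1 : T1),
        (∑ β, if β ≤ γ1 then w1 β * f (β, y, z) * Bc w2 w3 f β y z else 0)
          ≤ δ * f (γ1, y, z) := by
      intro y z γ1
      have hsφ : ∀ β : T1, f (β, y, z) ≠ 0 →
          (∑ b, if β ≤ b then w1 b * Bc w2 w3 f b y z else 0) ≤ δ := by
        intro β hne
        have h' := hsupp (β, y, z) hne
        rw [hI_eq] at h'
        exact h'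
      exact key h1 w1 (fun x => Bc w2 w3 f x y z) (fun x => f (x, y, z)) hw1
        (fun x => hBnn x y z) (fun x => hf _) (fun β => hs1 β y z) δ hδ hsφ γ1
    -- the chain-square estimate in coordinate 1
    have hCS : ∀ (y : T2) (z : T3) (x : T1), (Ac w1 f x y z)^2
        ≤ 2 * ∑ b1, if x ≤ b1 then (w1 b1 * f (b1, y, z)) * Ac w1 f b1 y z else 0 := by
      intro y z x
      exact chain_sq h1 (fun b1 => w1 b1 * f (b1, y, z))
        (fun b1 => mul_nonneg (hw1 b1) (hf _)) x
    -- per-(y,z) main estimate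
    have hstep1 : ∀ (y : T2) (z : T3),
        (∑ x, w1 x * (Ac w1 f x y z * Bc w2 w3 f x y z)^2 *
            (if Fc w1 w2 w3 f x y z ≤ lam then (1:ℝ) else 0))
          ≤ 2 * (lam * (δ * ∑ x, w1 x * f (x, y, z)^2)) := by
      intro y z
      have c_nn : ∀ x : T1, 0 ≤ w1 x * (Bc w2 w3 f x y z *
          (if Fc w1 w2 w3 f x y z ≤ lam then (1:ℝ) else 0)) * Bc w2 w3 f x y z :=
        fun x => mul_nonneg (mul_nonneg (hw1 x)
          (mul_nonneg (hBnn x y z) (hχ01 x y z).1)) (hBnn x y z)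
      calc (∑ x, w1 x * (Ac w1 f x y z * Bc w2 w3 f x y z)^2 *
              (if Fc w1 w2 w3 f x y z ≤ lam then (1:ℝ) else 0))
          ≤ ∑ x, (w1 x * (Bc w2 w3 f x y z *
              (if Fc w1 w2 w3 f x y z ≤ lam then (1:ℝ) else 0)) * Bc w2 w3 f x y z) *
              (2 * ∑ b1, if x ≤ b1 then (w1 b1 * f (b1, y, z)) * Ac w1 f b1 y z else 0) := by
            refine Finset.sum_le_sum fun x _ => ?_
            have heq : w1 x * (Ac w1 f x y z * Bc w2 w3 f x y z)^2 *
                (if Fc w1 w2 w3 f x y z ≤ lam then (1:ℝ) else 0)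
              = (w1 x * (Bc w2 w3 f x y z *
                (if Fc w1 w2 w3 f x y z ≤ lam then (1:ℝ) else 0)) * Bc w2 w3 f x y z) *
                (Ac w1 f x y z)^2 := by ring
            rw [heq]
            exact mul_le_mul_of_nonneg_left (hCS y z x) (c_nn x)
        _ = ∑ x, ∑ b1, (if x ≤ b1 then (w1 x * (Bc w2 w3 f x y z *
              (if Fc w1 w2 w3 f x y z ≤ lam then (1:ℝ) else 0)) * Bc w2 w3 f x y z) *
              (2 * ((w1 b1 * f (b1, y, z)) * Ac w1 f b1 y z)) else 0) := by
            refine Finset.sum_congr rfl fun x _ => ?_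
            simp only [Finset.mul_sum, mul_ite, mul_zero]
        _ = ∑ b1, ∑ x, (if x ≤ b1 then (w1 x * (Bc w2 w3 f x y z *
              (if Fc w1 w2 w3 f x y z ≤ lam then (1:ℝ) else 0)) * Bc w2 w3 f x y z) *
              (2 * ((w1 b1 * f (b1, y, z)) * Ac w1 f b1 y z)) else 0) := Finset.sum_comm
        _ = ∑ b1, (2 * ((w1 b1 * f (b1, y, z)) * Ac w1 f b1 y z)) *
              (∑ x, if x ≤ b1 then w1 x * (Bc w2 w3 f x y z *
                (if Fc w1 w2 w3 f x y z ≤ lam then (1:ℝ) else 0)) * Bc w2 w3 f x y z else 0) := by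
            refine Finset.sum_congr rfl fun b1 _ => ?_
            rw [Finset.mul_sum]
            refine Finset.sum_congr rfl fun x _ => ?_
            by_cases hx : x ≤ b1
            · rw [if_pos hx, if_pos hx]; ring
            · rw [if_neg hx, if_neg hx, mul_zero]
        _ ≤ ∑ b1, (2 * ((w1 b1 * f (b1, y, z)) * Ac w1 f b1 y z)) *
              (lam * Bc w2 w3 f b1 y z) := by
            refine Finset.sum_le_sum fun b1 _ => ?_
            refine mul_le_mul_of_nonneg_left (hD2 y z b1) ?_
            have hnn := mul_nonneg (mul_nonneg (hw1 b1) (hf (b1, y, z))) (hAnn b1 y z)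
            positivity
        _ = 2 * (lam * ∑ b1, w1 b1 * f (b1, y, z) * Ac w1 f b1 y z * Bc w2 w3 f b1 y z) := by
            rw [Finset.mul_sum, Finset.mul_sum]
            refine Finset.sum_congr rfl fun b1 _ => ?_
            ring
        _ ≤ 2 * (lam * (δ * ∑ x, w1 x * f (x, y, z)^2)) := by
            have hv : (∑ b1, w1 b1 * f (b1, y, z) * Ac w1 f b1 y z * Bc w2 w3 f b1 y z)
                ≤ δ * ∑ x, w1 x * f (x, y, z)^2 := by
              calc (∑ b1, w1 b1 * f (b1, y, z) * Ac w1 f b1 y z * Bc w2 w3 f b1 y z)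
                  = ∑ b1, ∑ γ1, (if b1 ≤ γ1 then (w1 γ1 * f (γ1, y, z)) *
                      (w1 b1 * f (b1, y, z) * Bc w2 w3 f b1 y z) else 0) := by
                    refine Finset.sum_congr rfl fun b1 _ => ?_
                    have heq : w1 b1 * f (b1, y, z) * Ac w1 f b1 y z * Bc w2 w3 f b1 y z
                        = (w1 b1 * f (b1, y, z) * Bc w2 w3 f b1 y z) * Ac w1 f b1 y z := by
                      ring
                    rw [heq]
                    simp only [Ac, Finset.mul_sum, mul_ite, mul_zero]
                    refine Finset.sum_congr rfl fun γ1 _ => ?_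
                    by_cases hb : b1 ≤ γ1
                    · rw [if_pos hb, if_pos hb]; ring
                    · rw [if_neg hb, if_neg hb]
                _ = ∑ γ1, (w1 γ1 * f (γ1, y, z)) *
                      (∑ b1, if b1 ≤ γ1 then w1 b1 * f (b1, y, z) * Bc w2 w3 f b1 y z else 0) := by
                    rw [Finset.sum_comm]
                    refine Finset.sum_congr rfl fun γ1 _ => ?_
                    rw [Finset.mul_sum]
                    refine Finset.sum_congr rfl fun b1 _ => ?_
                    by_cases hb : b1 ≤ γ1
                    · rw [if_pos hb, if_pos hb]
                    · rw [if_neg hb, if_neg hb, mul_zero]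
                _ ≤ ∑ γ1, (w1 γ1 * f (γ1, y, z)) * (δ * f (γ1, y, z)) := by
                    refine Finset.sum_le_sum fun γ1 _ => ?_
                    exact mul_le_mul_of_nonneg_left (hD1 y z γ1)
                      (mul_nonneg (hw1 γ1) (hf _))
                _ = δ * ∑ x, w1 x * f (x, y, z)^2 := by
                    rw [Finset.mul_sum]
                    refine Finset.sum_congr rfl fun γ1 _ => ?_
                    ring
            have h2lam : (0:ℝ) ≤ 2 * lam := by positivity
            nlinarith [hv, hlam]
    -- global assembly
    have hLHS : (∑ a, w1 a.1 * w2 a.2.1 * w3 a.2.2 *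
        (k1 (fun x => w1 x.1 * f x) a *
          k2 (k3 (fun x => w2 x.2.1 * w3 x.2.2 * f x)) a) ^ 2 *
        (if hI (fun x => w1 x.1 * w2 x.2.1 * w3 x.2.2 * f x) a ≤ lam then 1 else 0))
        = ∑ y, ∑ z, w2 y * w3 z * (∑ x, w1 x * (Ac w1 f x y z * Bc w2 w3 f x y z)^2 *
            (if Fc w1 w2 w3 f x y z ≤ lam then (1:ℝ) else 0)) := by
      refine Eq.trans (Fintype.sum_prod_type _) ?_
      refine Eq.trans (Finset.sum_congr rfl fun x _ => Fintype.sum_prod_type _) ?_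
      rw [Finset.sum_comm]
      refine Finset.sum_congr rfl fun y _ => ?_
      rw [Finset.sum_comm]
      refine Finset.sum_congr rfl fun z _ => ?_
      rw [Finset.mul_sum]
      refine Finset.sum_congr rfl fun x _ => ?_
      rw [hI_eq w1 w2 w3 f (x, y, z)]
      show w1 x * w2 y * w3 z * (Ac w1 f x y z * Bc w2 w3 f x y z)^2 *
          (if Fc w1 w2 w3 f x y z ≤ lam then (1:ℝ) else 0)
        = w2 y * w3 z * (w1 x * (Ac w1 f x y z * Bc w2 w3 f x y z)^2 *
          (if Fc w1 w2 w3 f x y z ≤ lam then (1:ℝ) else 0))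
      ring
    have hRHS : (∑ a, w1 a.1 * w2 a.2.1 * w3 a.2.2 * f a ^ 2)
        = ∑ y, ∑ z, w2 y * w3 z * ∑ x, w1 x * f (x, y, z)^2 := by
      refine Eq.trans (Fintype.sum_prod_type _) ?_
      refine Eq.trans (Finset.sum_congr rfl fun x _ => Fintype.sum_prod_type _) ?_
      rw [Finset.sum_comm]
      refine Finset.sum_congr rfl fun y _ => ?_
      rw [Finset.sum_comm]
      refine Finset.sum_congr rfl fun z _ => ?_
      rw [Finset.mul_sum]
      refine Finset.sum_congr rfl fun x _ => ?_
      show w1 x * w2 y * w3 z * f (x, y, z)^2 = w2 y * w3 z * (w1 x * f (x, y, z)^2)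
      ring
    rw [hLHS, hRHS]
    calc (∑ y, ∑ z, w2 y * w3 z * (∑ x, w1 x * (Ac w1 f x y z * Bc w2 w3 f x y z)^2 *
            (if Fc w1 w2 w3 f x y z ≤ lam then (1:ℝ) else 0)))
        ≤ ∑ y, ∑ z, w2 y * w3 z * (2 * (lam * (δ * ∑ x, w1 x * f (x, y, z)^2))) := by
          refine Finset.sum_le_sum fun y _ => Finset.sum_le_sum fun z _ => ?_
          exact mul_le_mul_of_nonneg_left (hstep1 y z) (mul_nonneg (hw2 y) (hw3 z))
      _ = 2 * δ * lam * ∑ y, ∑ z, w2 y * w3 z * ∑ x, w1 x * f (x, y, z)^2 := by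
          rw [Finset.mul_sum]
          refine Finset.sum_congr rfl fun y _ => ?_
          rw [Finset.mul_sum]
          refine Finset.sum_congr rfl fun z _ => ?_
          ring
end

section
/- Let $T^2$ be a bi-tree with $w \equiv 1$, potential $\mathbb{V}^\mu = \mathbb{I}\mathbb{I}^* \mu$, energy $\mathcal{E}[\mu] = \sum_{T^2} (\mathbb{I}^*\mu)^2$, and capacity $\mathrm{cap}(E) = \inf\{ \sum_{T^2} \varphi^2 : \varphi \geq 0,\ \mathbb{I}\varphi \geq 1 \text{ on } E \}$. If $\mu : T^2 \to [0,\infty)$ satisfies $\mathbb{V}^\mu \leq 1$ on $\operatorname{supp}\mu$, then for every $\lambda \geq 1$, $\mathrm{cap}(\{\mathbb{V}^\mu > \lambda\}) \leq C\, \mathcal{E}[\mu] / \lambda^4$ for an absolute constant $C$. -/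
open Finset
open scoped Classical

set_option linter.unusedSectionVars false
set_option maxHeartbeats 1000000

private lemma ind_mul_ind (P Q : Prop) [Decidable P] [Decidable Q] (x y : ℝ) :
    (if P then x else 0) * (if Q then y else 0) = if P ∧ Q then x * y else 0 := by
  split_ifs with h1 h2 h3 <;> simp_all

private lemma ite_nn (P : Prop) [Decidable P] {x : ℝ} (hx : 0 ≤ x) :
    0 ≤ if P then x else 0 := by split_ifs; exacts [hx, le_rfl]

private lemma pack2 {A B : Type} [Fintype A] [Fintype B] (G : A → B → ℝ) :
    ∑ a, ∑ b, G a b = ∑ p : A × B, G p.1 p.2 := by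
  exact (Fintype.sum_prod_type fun p => G p.1 p.2).symm

private lemma sum3_gen {A B C : Type} [Fintype A] [Fintype B] [Fintype C]
    (X : A → B → C → ℝ) :
    ∑ a, ∑ b, ∑ c, X a b c = ∑ c, ∑ a, ∑ b, X a b c := by
  calc ∑ a, ∑ b, ∑ c, X a b c = ∑ a, ∑ c, ∑ b, X a b c :=
        Finset.sum_congr rfl fun a _ => Finset.sum_comm
    _ = ∑ c, ∑ a, ∑ b, X a b c := Finset.sum_comm

/-- One-parameter telescoping: on a tree, `(∑_{c ≥ t} f c)² ≤ 2 ∑_{c ≥ t} f c ∑_{c' ≥ c} f c'`. -/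
private lemma tele {T : Type} [Fintype T] [PartialOrder T] (ht : IsTreeOrder T)
    (f : T → ℝ) (hf : ∀ c, 0 ≤ f c) (t : T) :
    (∑ c, if t ≤ c then f c else 0) ^ 2
      ≤ 2 * ∑ c, (if t ≤ c then f c * (∑ c', if c ≤ c' then f c' else 0) else 0) := by
  have hsq : (∑ c, if t ≤ c then f c else 0) ^ 2
      = ∑ c, ∑ c', (if t ≤ c ∧ t ≤ c' then f c * f c' else 0) := by
    rw [sq, Finset.sum_mul_sum]
    refine Finset.sum_congr rfl fun c _ => Finset.sum_congr rfl fun c' _ => ?_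
    split_ifs <;> simp_all
  have hcover : ∀ c c' : T, (if t ≤ c ∧ t ≤ c' then f c * f c' else 0)
      ≤ (if t ≤ c ∧ c ≤ c' then f c * f c' else 0)
        + (if t ≤ c' ∧ c' ≤ c then f c * f c' else 0) := by
    intro c c'
    have hcc : 0 ≤ f c * f c' := mul_nonneg (hf c) (hf c')
    have n1 := ite_nn (t ≤ c ∧ c ≤ c') hcc
    have n2 := ite_nn (t ≤ c' ∧ c' ≤ c) hcc
    by_cases h : t ≤ c ∧ t ≤ c'
    · rw [if_pos h]
      rcases ht t c c' h.1 h.2 with h1 | h1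
      · rw [if_pos ⟨h.1, h1⟩]; linarith
      · have e2 : (if t ≤ c' ∧ c' ≤ c then f c * f c' else 0) = f c * f c' :=
          if_pos ⟨h.2, h1⟩
        linarith
    · rw [if_neg h]; linarith
  have hhalf : ∀ c : T, ∑ c', (if t ≤ c ∧ c ≤ c' then f c * f c' else 0)
      = if t ≤ c then f c * (∑ c', if c ≤ c' then f c' else 0) else 0 := by
    intro c
    by_cases h : t ≤ c
    · rw [if_pos h, Finset.mul_sum]
      refine Finset.sum_congr rfl fun c' _ => ?_
      split_ifs <;> simp_all
    · rw [if_neg h]; exact Finset.sum_eq_zero fun c' _ => if_neg (by tauto)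
  have hsym : ∑ c, ∑ c', (if t ≤ c' ∧ c' ≤ c then f c * f c' else 0)
      = ∑ c, ∑ c', (if t ≤ c ∧ c ≤ c' then f c * f c' else 0) := by
    rw [Finset.sum_comm]
    exact Finset.sum_congr rfl fun c _ => Finset.sum_congr rfl fun c' _ => by rw [mul_comm]
  calc (∑ c, if t ≤ c then f c else 0) ^ 2
      = ∑ c, ∑ c', (if t ≤ c ∧ t ≤ c' then f c * f c' else 0) := hsq
    _ ≤ ∑ c, ∑ c', ((if t ≤ c ∧ c ≤ c' then f c * f c' else 0)
          + (if t ≤ c' ∧ c' ≤ c then f c * f c' else 0)) :=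
        Finset.sum_le_sum fun c _ => Finset.sum_le_sum fun c' _ => hcover c c'
    _ = (∑ c, ∑ c', (if t ≤ c ∧ c ≤ c' then f c * f c' else 0))
          + ∑ c, ∑ c', (if t ≤ c' ∧ c' ≤ c then f c * f c' else 0) := by
        simp only [Finset.sum_add_distrib]
    _ = 2 * ∑ c, ∑ c', (if t ≤ c ∧ c ≤ c' then f c * f c' else 0) := by
        rw [hsym]; ring
    _ = 2 * ∑ c, (if t ≤ c then f c * (∑ c', if c ≤ c' then f c' else 0) else 0) := by
        rw [Finset.sum_congr rfl fun c _ => hhalf c]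

section Aux
variable {T1 T2 : Type} [Fintype T1] [PartialOrder T1] [Fintype T2] [PartialOrder T2]

private lemma sum_pack (f : (T1 × T2) → (T1 × T2) → ℝ) :
    ∑ x : T1 × T2, ∑ y : T1 × T2, f x y = ∑ p : (T1 × T2) × (T1 × T2), f p.1 p.2 := by
  exact (Fintype.sum_prod_type fun p => f p.1 p.2).symm

private lemma unpack2 (G : T1 → T2 → ℝ) :
    ∑ c, ∑ d, G c d = ∑ y : T1 × T2, G y.1 y.2 := by
  exact (Fintype.sum_prod_type fun y => G y.1 y.2).symm

private lemma sum4_swap (f : T1 → T2 → T1 → T2 → ℝ) :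
    ∑ x : T1 × T2, ∑ y : T1 × T2, f x.1 x.2 y.1 y.2
      = ∑ x : T1 × T2, ∑ y : T1 × T2, f y.1 x.2 x.1 y.2 := by
  rw [sum_pack, sum_pack]
  exact Fintype.sum_equiv
    ⟨fun p => ((p.2.1, p.1.2), (p.1.1, p.2.2)), fun p => ((p.2.1, p.1.2), (p.1.1, p.2.2)),
      fun p => rfl, fun p => rfl⟩
    _ _ (fun p => rfl)

/-- The hook expansion: `∑_{β} [P β] (I₁g₁)(β)(I₂g₂)(β) = ∑ over SE-pairs (x,y)`. -/
private lemma hook_expand (g1 g2 : T1 × T2 → ℝ) (P : T1 × T2 → Prop) :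
    ∑ β : T1 × T2, (if P β then
        (∑ c : T1, if β.1 ≤ c then g1 (c, β.2) else 0) *
        (∑ d : T2, if β.2 ≤ d then g2 (β.1, d) else 0) else 0)
      = ∑ x : T1 × T2, ∑ y : T1 × T2,
          if P (y.1, x.2) ∧ y.1 ≤ x.1 ∧ x.2 ≤ y.2 then g1 x * g2 y else 0 := by
  have h1 : ∀ β : T1 × T2, (if P β then
        (∑ c : T1, if β.1 ≤ c then g1 (c, β.2) else 0) *
        (∑ d : T2, if β.2 ≤ d then g2 (β.1, d) else 0) else 0)
      = ∑ c : T1, ∑ d : T2,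
          if P β ∧ β.1 ≤ c ∧ β.2 ≤ d then g1 (c, β.2) * g2 (β.1, d) else 0 := by
    intro β
    by_cases hP : P β
    · rw [if_pos hP, Finset.sum_mul_sum]
      refine Finset.sum_congr rfl fun c _ => Finset.sum_congr rfl fun d _ => ?_
      rw [ind_mul_ind]
      exact if_congr ⟨fun h => ⟨hP, h⟩, fun h => h.2⟩ rfl rfl
    · rw [if_neg hP]
      exact (Finset.sum_eq_zero fun c _ => Finset.sum_eq_zero fun d _ =>
        if_neg fun h => hP h.1).symm
  calc ∑ β : T1 × T2, (if P β then
        (∑ c : T1, if β.1 ≤ c then g1 (c, β.2) else 0) *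
        (∑ d : T2, if β.2 ≤ d then g2 (β.1, d) else 0) else 0)
      = ∑ β : T1 × T2, ∑ c : T1, ∑ d : T2,
          if P β ∧ β.1 ≤ c ∧ β.2 ≤ d then g1 (c, β.2) * g2 (β.1, d) else 0 :=
        Finset.sum_congr rfl fun β _ => h1 β
    _ = ∑ x : T1 × T2, ∑ y : T1 × T2,
          (fun b1 b2 c d => if P (b1, b2) ∧ b1 ≤ c ∧ b2 ≤ d then g1 (c, b2) * g2 (b1, d) else 0)
            x.1 x.2 y.1 y.2 :=
        Finset.sum_congr rfl fun β _ => unpack2 _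
    _ = ∑ x : T1 × T2, ∑ y : T1 × T2,
          (fun b1 b2 c d => if P (b1, b2) ∧ b1 ≤ c ∧ b2 ≤ d then g1 (c, b2) * g2 (b1, d) else 0)
            y.1 x.2 x.1 y.2 := by
        exact sum4_swap fun b1 b2 c d =>
          if P (b1, b2) ∧ b1 ≤ c ∧ b2 ≤ d then g1 (c, b2) * g2 (b1, d) else 0
    _ = ∑ x : T1 × T2, ∑ y : T1 × T2,
          if P (y.1, x.2) ∧ y.1 ≤ x.1 ∧ x.2 ≤ y.2 then g1 x * g2 y else 0 := rfl

noncomputable def sV1 (μ : T1 × T2 → ℝ) (b : T1 × T2) : ℝ :=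
  ∑ c : T1, if b.1 ≤ c then hIstar μ (c, b.2) else 0

noncomputable def sV2 (μ : T1 × T2 → ℝ) (b : T1 × T2) : ℝ :=
  ∑ c : T2, if b.2 ≤ c then hIstar μ (b.1, c) else 0

variable {μ : T1 × T2 → ℝ}

lemma hIstar_nonneg (hμ : ∀ a, 0 ≤ μ a) (b : T1 × T2) : 0 ≤ hIstar μ b :=
  Finset.sum_nonneg fun a _ => by split_ifs; exacts [hμ a, le_rfl]

lemma hI_nonneg {T : Type*} [Fintype T] [PartialOrder T] {f : T → ℝ}
    (hf : ∀ x, 0 ≤ f x) (a : T) : 0 ≤ hI f a :=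
  Finset.sum_nonneg fun b _ => by split_ifs; exacts [hf b, le_rfl]

lemma sV1_nonneg (hμ : ∀ a, 0 ≤ μ a) (b : T1 × T2) : 0 ≤ sV1 μ b :=
  Finset.sum_nonneg fun c _ => by split_ifs; exacts [hIstar_nonneg hμ _, le_rfl]

lemma sV2_nonneg (hμ : ∀ a, 0 ≤ μ a) (b : T1 × T2) : 0 ≤ sV2 μ b :=
  Finset.sum_nonneg fun c _ => by split_ifs; exacts [hIstar_nonneg hμ _, le_rfl]

lemma hI_anti {T : Type*} [Fintype T] [PartialOrder T] {f : T → ℝ}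
    (hf : ∀ x, 0 ≤ f x) {a b : T} (hab : a ≤ b) : hI f b ≤ hI f a := by
  refine Finset.sum_le_sum fun c _ => ?_
  by_cases h : b ≤ c
  · rw [if_pos h, if_pos (le_trans hab h)]
  · rw [if_neg h]; split_ifs; exacts [hf c, le_rfl]

lemma V_le_one (hμ : ∀ a, 0 ≤ μ a) (hpot : ∀ a, μ a ≠ 0 → hI (hIstar μ) a ≤ 1)
    {b : T1 × T2} (hb : hIstar μ b ≠ 0) : hI (hIstar μ) b ≤ 1 := by
  rw [hIstar] at hb
  obtain ⟨a, -, ha⟩ := Finset.exists_ne_zero_of_sum_ne_zero hb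
  by_cases hab : a ≤ b
  · rw [if_pos hab] at ha
    exact le_trans (hI_anti (hIstar_nonneg hμ) hab) (hpot a ha)
  · rw [if_neg hab] at ha; exact absurd rfl ha

/-- Specialization of the hook expansion to the pair form. -/
lemma sum_hook (μ : T1 × T2 → ℝ) (α : T1 × T2) :
    ∑ β, (if α ≤ β then sV1 μ β * sV2 μ β else 0)
      = ∑ x : T1 × T2, ∑ y : T1 × T2,
          if (α.1 ≤ y.1 ∧ α.2 ≤ x.2) ∧ y.1 ≤ x.1 ∧ x.2 ≤ y.2
          then hIstar μ x * hIstar μ y else 0 := by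
  refine Eq.trans (Finset.sum_congr rfl fun β _ => ?_)
    ((hook_expand (hIstar μ) (hIstar μ) (fun β => α ≤ β)).trans
      (Finset.sum_congr rfl fun x _ => Finset.sum_congr rfl fun y _ => ?_))
  · split_ifs <;> rfl
  · split_ifs <;> first | rfl | (exfalso; simp_all [Prod.le_def])

/-- Sum of `g x * g y` over fully comparable pairs in the up-set of `α` is at most `V α`. -/
private lemma comp_pairs_le (hμ : ∀ a, 0 ≤ μ a)
    (hpot : ∀ a, μ a ≠ 0 → hI (hIstar μ) a ≤ 1) (α : T1 × T2) :
    ∑ x : T1 × T2, ∑ y : T1 × T2,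
        (if α ≤ x ∧ x ≤ y then hIstar μ x * hIstar μ y else 0)
      ≤ hI (hIstar μ) α := by
  have hx : ∀ x : T1 × T2, ∑ y, (if α ≤ x ∧ x ≤ y then hIstar μ x * hIstar μ y else 0)
      = if α ≤ x then hIstar μ x * hI (hIstar μ) x else 0 := by
    intro x
    by_cases h : α ≤ x
    · rw [if_pos h, hI, Finset.mul_sum]
      refine Finset.sum_congr rfl fun y _ => ?_
      split_ifs <;> simp_all
    · rw [if_neg h]; exact Finset.sum_eq_zero fun y _ => if_neg (by tauto)
  calc ∑ x : T1 × T2, ∑ y : T1 × T2,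
        (if α ≤ x ∧ x ≤ y then hIstar μ x * hIstar μ y else 0)
      = ∑ x, (if α ≤ x then hIstar μ x * hI (hIstar μ) x else 0) :=
        Finset.sum_congr rfl fun x _ => hx x
    _ ≤ ∑ x, (if α ≤ x then hIstar μ x else 0) := by
        refine Finset.sum_le_sum fun x _ => ?_
        by_cases h : α ≤ x
        · rw [if_pos h, if_pos h]
          rcases eq_or_ne (hIstar μ x) 0 with h0 | h0
          · rw [h0, zero_mul]
          · calc hIstar μ x * hI (hIstar μ) x ≤ hIstar μ x * 1 :=
                  mul_le_mul_of_nonneg_left (V_le_one hμ hpot h0) (hIstar_nonneg hμ x)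
              _ = hIstar μ x := mul_one _
        · rw [if_neg h, if_neg h]
    _ = hI (hIstar μ) α := by
        rw [hI]; exact Finset.sum_congr rfl fun x _ => by split_ifs <;> rfl

/-- The key lower bound: `V α ^ 2 ≤ 2 Σ_R(α) + 2 V α`. -/
lemma lower_bound (ht1 : IsTreeOrder T1) (ht2 : IsTreeOrder T2) (hμ : ∀ a, 0 ≤ μ a)
    (hpot : ∀ a, μ a ≠ 0 → hI (hIstar μ) a ≤ 1) (α : T1 × T2) :
    hI (hIstar μ) α ^ 2 ≤
      2 * (∑ β, if α ≤ β then sV1 μ β * sV2 μ β else 0) + 2 * hI (hIstar μ) α := by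
  have hA : hI (hIstar μ) α ^ 2 = ∑ x : T1 × T2, ∑ y : T1 × T2,
      (if α ≤ x ∧ α ≤ y then hIstar μ x * hIstar μ y else 0) := by
    rw [hI, sq, Finset.sum_mul_sum]
    refine Finset.sum_congr rfl fun x _ => Finset.sum_congr rfl fun y _ => ?_
    split_ifs <;> simp_all
  -- the four cover terms
  have cover : ∀ x y : T1 × T2,
      (if α ≤ x ∧ α ≤ y then hIstar μ x * hIstar μ y else 0)
        ≤ (if (α.1 ≤ y.1 ∧ α.2 ≤ x.2) ∧ y.1 ≤ x.1 ∧ x.2 ≤ y.2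
              then hIstar μ x * hIstar μ y else 0)
          + ((if (α.1 ≤ x.1 ∧ α.2 ≤ y.2) ∧ x.1 ≤ y.1 ∧ y.2 ≤ x.2
              then hIstar μ x * hIstar μ y else 0)
          + ((if α ≤ y ∧ y ≤ x then hIstar μ x * hIstar μ y else 0)
          + (if α ≤ x ∧ x ≤ y then hIstar μ x * hIstar μ y else 0))) := by
    intro x y
    have hxy : 0 ≤ hIstar μ x * hIstar μ y :=
      mul_nonneg (hIstar_nonneg hμ x) (hIstar_nonneg hμ y)
    have n1 := ite_nn ((α.1 ≤ y.1 ∧ α.2 ≤ x.2) ∧ y.1 ≤ x.1 ∧ x.2 ≤ y.2) hxy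
    have n2 := ite_nn ((α.1 ≤ x.1 ∧ α.2 ≤ y.2) ∧ x.1 ≤ y.1 ∧ y.2 ≤ x.2) hxy
    have n3 := ite_nn (α ≤ y ∧ y ≤ x) hxy
    have n4 := ite_nn (α ≤ x ∧ x ≤ y) hxy
    by_cases h : α ≤ x ∧ α ≤ y
    · rw [if_pos h]
      obtain ⟨hx, hy⟩ := h
      rw [Prod.le_def] at hx hy
      rcases ht1 α.1 x.1 y.1 hx.1 hy.1 with h1 | h1 <;>
        rcases ht2 α.2 x.2 y.2 hx.2 hy.2 with h2 | h2
      · have e4 : (if α ≤ x ∧ x ≤ y then hIstar μ x * hIstar μ y else 0)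
            = hIstar μ x * hIstar μ y :=
          if_pos ⟨Prod.le_def.mpr hx, Prod.le_def.mpr ⟨h1, h2⟩⟩
        linarith
      · have e2 : (if (α.1 ≤ x.1 ∧ α.2 ≤ y.2) ∧ x.1 ≤ y.1 ∧ y.2 ≤ x.2
              then hIstar μ x * hIstar μ y else 0) = hIstar μ x * hIstar μ y :=
          if_pos ⟨⟨hx.1, hy.2⟩, h1, h2⟩
        linarith
      · have e1 : (if (α.1 ≤ y.1 ∧ α.2 ≤ x.2) ∧ y.1 ≤ x.1 ∧ x.2 ≤ y.2
              then hIstar μ x * hIstar μ y else 0) = hIstar μ x * hIstar μ y :=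
          if_pos ⟨⟨hy.1, hx.2⟩, h1, h2⟩
        linarith
      · have e3 : (if α ≤ y ∧ y ≤ x then hIstar μ x * hIstar μ y else 0)
            = hIstar μ x * hIstar μ y :=
          if_pos ⟨Prod.le_def.mpr hy, Prod.le_def.mpr ⟨h1, h2⟩⟩
        linarith
    · rw [if_neg h]; linarith
  -- sum the cover
  have hsum : hI (hIstar μ) α ^ 2
      ≤ (∑ x : T1 × T2, ∑ y : T1 × T2,
          (if (α.1 ≤ y.1 ∧ α.2 ≤ x.2) ∧ y.1 ≤ x.1 ∧ x.2 ≤ y.2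
            then hIstar μ x * hIstar μ y else 0))
        + ((∑ x : T1 × T2, ∑ y : T1 × T2,
          (if (α.1 ≤ x.1 ∧ α.2 ≤ y.2) ∧ x.1 ≤ y.1 ∧ y.2 ≤ x.2
            then hIstar μ x * hIstar μ y else 0))
        + ((∑ x : T1 × T2, ∑ y : T1 × T2,
          (if α ≤ y ∧ y ≤ x then hIstar μ x * hIstar μ y else 0))
        + (∑ x : T1 × T2, ∑ y : T1 × T2,
          (if α ≤ x ∧ x ≤ y then hIstar μ x * hIstar μ y else 0)))) := by
    rw [hA]
    calc ∑ x : T1 × T2, ∑ y : T1 × T2,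
          (if α ≤ x ∧ α ≤ y then hIstar μ x * hIstar μ y else 0)
        ≤ ∑ x : T1 × T2, ∑ y : T1 × T2,
          ((if (α.1 ≤ y.1 ∧ α.2 ≤ x.2) ∧ y.1 ≤ x.1 ∧ x.2 ≤ y.2
              then hIstar μ x * hIstar μ y else 0)
          + ((if (α.1 ≤ x.1 ∧ α.2 ≤ y.2) ∧ x.1 ≤ y.1 ∧ y.2 ≤ x.2
              then hIstar μ x * hIstar μ y else 0)
          + ((if α ≤ y ∧ y ≤ x then hIstar μ x * hIstar μ y else 0)
          + (if α ≤ x ∧ x ≤ y then hIstar μ x * hIstar μ y else 0)))) :=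
        Finset.sum_le_sum fun x _ => Finset.sum_le_sum fun y _ => cover x y
      _ = _ := by simp only [Finset.sum_add_distrib]
  -- identify the first two terms with Σ_R and bound the last two by V α
  have hB : ∑ x : T1 × T2, ∑ y : T1 × T2,
        (if (α.1 ≤ x.1 ∧ α.2 ≤ y.2) ∧ x.1 ≤ y.1 ∧ y.2 ≤ x.2
          then hIstar μ x * hIstar μ y else 0)
      = ∑ x : T1 × T2, ∑ y : T1 × T2,
        (if (α.1 ≤ y.1 ∧ α.2 ≤ x.2) ∧ y.1 ≤ x.1 ∧ x.2 ≤ y.2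
          then hIstar μ x * hIstar μ y else 0) := by
    rw [Finset.sum_comm]
    exact Finset.sum_congr rfl fun x _ => Finset.sum_congr rfl fun y _ => by rw [mul_comm]
  have hC : ∑ x : T1 × T2, ∑ y : T1 × T2,
        (if α ≤ y ∧ y ≤ x then hIstar μ x * hIstar μ y else 0)
      ≤ hI (hIstar μ) α := by
    rw [Finset.sum_comm]
    refine le_trans (le_of_eq ?_) (comp_pairs_le hμ hpot α)
    exact Finset.sum_congr rfl fun x _ => Finset.sum_congr rfl fun y _ => by rw [mul_comm]
  have hD := comp_pairs_le hμ hpot α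
  have hhook := sum_hook μ α
  linarith


private lemma slice1_le (hμ : ∀ a, 0 ≤ μ a) (u1 : T1) (a2 w2 : T2) :
    ∑ u2 : T2, (if a2 ≤ u2 ∧ u2 ≤ w2 then sV1 μ (u1, u2) else 0)
      ≤ hI (hIstar μ) (u1, a2) := by
  have h1 : ∀ u2, (if a2 ≤ u2 ∧ u2 ≤ w2 then sV1 μ (u1, u2) else 0)
      ≤ (if a2 ≤ u2 then sV1 μ (u1, u2) else 0) := by
    intro u2
    split_ifs <;> first | rfl | exact sV1_nonneg hμ _ | tauto | exact le_rfl
  refine le_trans (Finset.sum_le_sum fun u2 _ => h1 u2) (le_of_eq ?_)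
  calc ∑ u2, (if a2 ≤ u2 then sV1 μ (u1, u2) else 0)
      = ∑ u2, ∑ c, (if a2 ≤ u2 ∧ u1 ≤ c then hIstar μ (c, u2) else 0) := by
        refine Finset.sum_congr rfl fun u2 _ => ?_
        by_cases h : a2 ≤ u2
        · rw [if_pos h, sV1]
          exact Finset.sum_congr rfl fun c _ => by split_ifs <;> first | rfl | tauto
        · rw [if_neg h]; exact (Finset.sum_eq_zero fun c _ => if_neg (by tauto)).symm
    _ = ∑ c, ∑ u2, (if a2 ≤ u2 ∧ u1 ≤ c then hIstar μ (c, u2) else 0) := Finset.sum_comm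
    _ = hI (hIstar μ) (u1, a2) := by
        rw [hI, Fintype.sum_prod_type]
        refine Finset.sum_congr rfl fun c _ => Finset.sum_congr rfl fun u2 _ => ?_
        split_ifs <;> first | rfl | (exfalso; simp_all [Prod.le_def])

private lemma slice2_le (hμ : ∀ a, 0 ≤ μ a) (b1 u1 : T1) (w2 : T2) :
    ∑ w1 : T1, (if b1 ≤ w1 ∧ w1 ≤ u1 then sV2 μ (w1, w2) else 0)
      ≤ hI (hIstar μ) (b1, w2) := by
  have h1 : ∀ w1, (if b1 ≤ w1 ∧ w1 ≤ u1 then sV2 μ (w1, w2) else 0)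
      ≤ (if b1 ≤ w1 then sV2 μ (w1, w2) else 0) := by
    intro w1
    split_ifs <;> first | rfl | exact sV2_nonneg hμ _ | tauto | exact le_rfl
  refine le_trans (Finset.sum_le_sum fun w1 _ => h1 w1) (le_of_eq ?_)
  calc ∑ w1, (if b1 ≤ w1 then sV2 μ (w1, w2) else 0)
      = ∑ w1, ∑ d, (if b1 ≤ w1 ∧ w2 ≤ d then hIstar μ (w1, d) else 0) := by
        refine Finset.sum_congr rfl fun w1 _ => ?_
        by_cases h : b1 ≤ w1
        · rw [if_pos h, sV2]
          exact Finset.sum_congr rfl fun d _ => by split_ifs <;> first | rfl | tauto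
        · rw [if_neg h]; exact (Finset.sum_eq_zero fun d _ => if_neg (by tauto)).symm
    _ = hI (hIstar μ) (b1, w2) := by
        rw [hI, Fintype.sum_prod_type]
        refine Finset.sum_congr rfl fun w1 _ => Finset.sum_congr rfl fun d _ => ?_
        split_ifs <;> first | rfl | (exfalso; simp_all [Prod.le_def])



private lemma K_le_N (hμ : ∀ a, 0 ≤ μ a) (hpot : ∀ a, μ a ≠ 0 → hI (hIstar μ) a ≤ 1)
    {a b : T1 × T2} (ha : μ a ≠ 0) (hb : μ b ≠ 0) :
    ∑ u : T1 × T2, ∑ w : T1 × T2,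
        (if (a ≤ u ∧ b ≤ w) ∧ w.1 ≤ u.1 ∧ u.2 ≤ w.2 then sV1 μ u * sV2 μ w else 0)
      ≤ (∑ c : T1, if a.1 ≤ c ∧ b.1 ≤ c then (1:ℝ) else 0)
        * (∑ d : T2, if a.2 ≤ d ∧ b.2 ≤ d then (1:ℝ) else 0) := by
  have key : ∀ (u1 : T1) (w2 : T2),
      (∑ u2 : T2, ∑ w1 : T1,
        (if (a ≤ (u1, u2) ∧ b ≤ (w1, w2)) ∧ w1 ≤ u1 ∧ u2 ≤ w2
          then sV1 μ (u1, u2) * sV2 μ (w1, w2) else 0))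
      ≤ (if a.1 ≤ u1 ∧ b.1 ≤ u1 then (1:ℝ) else 0)
        * (if a.2 ≤ w2 ∧ b.2 ≤ w2 then (1:ℝ) else 0) := by
    intro u1 w2
    by_cases h1 : a.1 ≤ u1 ∧ b.1 ≤ u1
    · by_cases h2 : a.2 ≤ w2 ∧ b.2 ≤ w2
      · have hpt : ∀ (u2 : T2) (w1 : T1),
            (if (a ≤ (u1, u2) ∧ b ≤ (w1, w2)) ∧ w1 ≤ u1 ∧ u2 ≤ w2
              then sV1 μ (u1, u2) * sV2 μ (w1, w2) else 0)
            = (if a.2 ≤ u2 ∧ u2 ≤ w2 then sV1 μ (u1, u2) else 0)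
              * (if b.1 ≤ w1 ∧ w1 ≤ u1 then sV2 μ (w1, w2) else 0) := by
          intro u2 w1
          rw [ind_mul_ind]
          split_ifs <;> first | rfl | (exfalso; simp_all [Prod.le_def])
        have hA : (∑ u2 : T2, (if a.2 ≤ u2 ∧ u2 ≤ w2 then sV1 μ (u1, u2) else 0)) ≤ 1 := by
          refine le_trans (slice1_le hμ u1 a.2 w2) (le_trans ?_ (hpot a ha))
          exact hI_anti (hIstar_nonneg hμ) (Prod.le_def.mpr ⟨h1.1, le_rfl⟩)
        have hB : (∑ w1 : T1, (if b.1 ≤ w1 ∧ w1 ≤ u1 then sV2 μ (w1, w2) else 0) : ℝ) ≤ 1 := by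
          refine le_trans (slice2_le hμ b.1 u1 w2) (le_trans ?_ (hpot b hb))
          exact hI_anti (hIstar_nonneg hμ) (Prod.le_def.mpr ⟨le_rfl, h2.2⟩)
        have hA0 : (0:ℝ) ≤ ∑ u2 : T2, (if a.2 ≤ u2 ∧ u2 ≤ w2 then sV1 μ (u1, u2) else 0) :=
          Finset.sum_nonneg fun u2 _ => ite_nn _ (sV1_nonneg hμ _)
        have hB0 : (0:ℝ) ≤ ∑ w1 : T1, (if b.1 ≤ w1 ∧ w1 ≤ u1 then sV2 μ (w1, w2) else 0) :=
          Finset.sum_nonneg fun w1 _ => ite_nn _ (sV2_nonneg hμ _)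
        calc (∑ u2 : T2, ∑ w1 : T1,
              (if (a ≤ (u1, u2) ∧ b ≤ (w1, w2)) ∧ w1 ≤ u1 ∧ u2 ≤ w2
                then sV1 μ (u1, u2) * sV2 μ (w1, w2) else 0))
            = (∑ u2 : T2, (if a.2 ≤ u2 ∧ u2 ≤ w2 then sV1 μ (u1, u2) else 0))
              * (∑ w1 : T1, (if b.1 ≤ w1 ∧ w1 ≤ u1 then sV2 μ (w1, w2) else 0)) := by
              rw [Finset.sum_mul_sum]
              exact Finset.sum_congr rfl fun u2 _ => Finset.sum_congr rfl fun w1 _ => hpt u2 w1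
          _ ≤ 1 := by nlinarith
          _ = (if a.1 ≤ u1 ∧ b.1 ≤ u1 then (1:ℝ) else 0)
              * (if a.2 ≤ w2 ∧ b.2 ≤ w2 then (1:ℝ) else 0) := by
              rw [if_pos h1, if_pos h2, one_mul]
      · refine le_trans (le_of_eq (Finset.sum_eq_zero fun u2 _ =>
          Finset.sum_eq_zero fun w1 _ => if_neg fun hc => ?_)) ?_
        · exact h2 ⟨le_trans (Prod.le_def.mp hc.1.1).2 hc.2.2, (Prod.le_def.mp hc.1.2).2⟩
        · rw [if_neg h2, mul_zero]
    · refine le_trans (le_of_eq (Finset.sum_eq_zero fun u2 _ =>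
        Finset.sum_eq_zero fun w1 _ => if_neg fun hc => ?_)) ?_
      · exact h1 ⟨(Prod.le_def.mp hc.1.1).1, le_trans (Prod.le_def.mp hc.1.2).1 hc.2.1⟩
      · rw [if_neg h1, zero_mul]
  calc ∑ u : T1 × T2, ∑ w : T1 × T2,
        (if (a ≤ u ∧ b ≤ w) ∧ w.1 ≤ u.1 ∧ u.2 ≤ w.2 then sV1 μ u * sV2 μ w else 0)
      = ∑ u1 : T1, ∑ u2 : T2, ∑ w1 : T1, ∑ w2 : T2,
          (if (a ≤ (u1, u2) ∧ b ≤ (w1, w2)) ∧ w1 ≤ u1 ∧ u2 ≤ w2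
            then sV1 μ (u1, u2) * sV2 μ (w1, w2) else 0) := by
        rw [Fintype.sum_prod_type]
        exact Finset.sum_congr rfl fun u1 _ => Finset.sum_congr rfl fun u2 _ => by
          rw [Fintype.sum_prod_type]
    _ = ∑ u1 : T1, ∑ w2 : T2, ∑ u2 : T2, ∑ w1 : T1,
          (if (a ≤ (u1, u2) ∧ b ≤ (w1, w2)) ∧ w1 ≤ u1 ∧ u2 ≤ w2
            then sV1 μ (u1, u2) * sV2 μ (w1, w2) else 0) :=
        Finset.sum_congr rfl fun u1 _ => sum3_gen _
    _ ≤ ∑ u1 : T1, ∑ w2 : T2,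
          (if a.1 ≤ u1 ∧ b.1 ≤ u1 then (1:ℝ) else 0)
          * (if a.2 ≤ w2 ∧ b.2 ≤ w2 then (1:ℝ) else 0) :=
        Finset.sum_le_sum fun u1 _ => Finset.sum_le_sum fun w2 _ => key u1 w2
    _ = (∑ c : T1, if a.1 ≤ c ∧ b.1 ≤ c then (1:ℝ) else 0)
        * (∑ d : T2, if a.2 ≤ d ∧ b.2 ≤ d then (1:ℝ) else 0) := by
        rw [Finset.sum_mul_sum]



private lemma E_id :
    ∑ p : (T1 × T2) × (T1 × T2), μ p.1 * μ p.2
        * ((∑ c : T1, if p.1.1 ≤ c ∧ p.2.1 ≤ c then (1:ℝ) else 0)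
          * (∑ d : T2, if p.1.2 ≤ d ∧ p.2.2 ≤ d then (1:ℝ) else 0))
      = ∑ z : T1 × T2, hIstar μ z ^ 2 := by
  have hz : ∀ z : T1 × T2, hIstar μ z ^ 2
      = ∑ p : (T1 × T2) × (T1 × T2), (if p.1 ≤ z ∧ p.2 ≤ z then μ p.1 * μ p.2 else 0) := by
    intro z
    rw [sq, hIstar, Finset.sum_mul_sum, pack2]
    exact Finset.sum_congr rfl fun p _ => by split_ifs <;> simp_all
  have hcount : ∀ p : (T1 × T2) × (T1 × T2),
      (∑ z : T1 × T2, (if p.1 ≤ z ∧ p.2 ≤ z then (1:ℝ) else 0))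
        = (∑ c : T1, if p.1.1 ≤ c ∧ p.2.1 ≤ c then (1:ℝ) else 0)
          * (∑ d : T2, if p.1.2 ≤ d ∧ p.2.2 ≤ d then (1:ℝ) else 0) := by
    intro p
    rw [Finset.sum_mul_sum, Fintype.sum_prod_type]
    refine Finset.sum_congr rfl fun z1 _ => Finset.sum_congr rfl fun z2 _ => ?_
    split_ifs <;> simp_all [Prod.le_def]
  calc ∑ p : (T1 × T2) × (T1 × T2), μ p.1 * μ p.2
        * ((∑ c : T1, if p.1.1 ≤ c ∧ p.2.1 ≤ c then (1:ℝ) else 0)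
          * (∑ d : T2, if p.1.2 ≤ d ∧ p.2.2 ≤ d then (1:ℝ) else 0))
      = ∑ p : (T1 × T2) × (T1 × T2), μ p.1 * μ p.2
          * (∑ z : T1 × T2, (if p.1 ≤ z ∧ p.2 ≤ z then (1:ℝ) else 0)) :=
        Finset.sum_congr rfl fun p _ => by rw [hcount p]
    _ = ∑ p : (T1 × T2) × (T1 × T2), ∑ z : T1 × T2,
          (if p.1 ≤ z ∧ p.2 ≤ z then μ p.1 * μ p.2 else 0) := by
        refine Finset.sum_congr rfl fun p _ => ?_
        rw [Finset.mul_sum]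
        exact Finset.sum_congr rfl fun z _ => by split_ifs <;> simp
    _ = ∑ z : T1 × T2, ∑ p : (T1 × T2) × (T1 × T2),
          (if p.1 ≤ z ∧ p.2 ≤ z then μ p.1 * μ p.2 else 0) := Finset.sum_comm
    _ = ∑ z : T1 × T2, hIstar μ z ^ 2 :=
        Finset.sum_congr rfl fun z _ => (hz z).symm

lemma Q_le_E (hμ : ∀ a, 0 ≤ μ a) (hpot : ∀ a, μ a ≠ 0 → hI (hIstar μ) a ≤ 1) :
    ∑ x : T1 × T2, ∑ y : T1 × T2,
        (if y.1 ≤ x.1 ∧ x.2 ≤ y.2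
          then (hIstar μ x * sV1 μ x) * (hIstar μ y * sV2 μ y) else 0)
      ≤ ∑ z : T1 × T2, hIstar μ z ^ 2 := by
  have hpt : ∀ x y : T1 × T2,
      (if y.1 ≤ x.1 ∧ x.2 ≤ y.2
        then (hIstar μ x * sV1 μ x) * (hIstar μ y * sV2 μ y) else 0)
      = ∑ p : (T1 × T2) × (T1 × T2),
          (if (p.1 ≤ x ∧ p.2 ≤ y) ∧ (y.1 ≤ x.1 ∧ x.2 ≤ y.2)
            then (μ p.1 * μ p.2) * (sV1 μ x * sV2 μ y) else 0) := by
    intro x y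
    by_cases hR : y.1 ≤ x.1 ∧ x.2 ≤ y.2
    · rw [if_pos hR]
      have hg : hIstar μ x * hIstar μ y
          = ∑ p : (T1 × T2) × (T1 × T2), (if p.1 ≤ x ∧ p.2 ≤ y then μ p.1 * μ p.2 else 0) := by
        rw [hIstar, hIstar, Finset.sum_mul_sum, pack2]
        exact Finset.sum_congr rfl fun p _ => by split_ifs <;> simp_all
      calc (hIstar μ x * sV1 μ x) * (hIstar μ y * sV2 μ y)
          = (hIstar μ x * hIstar μ y) * (sV1 μ x * sV2 μ y) := by ring
        _ = (∑ p : (T1 × T2) × (T1 × T2),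
              (if p.1 ≤ x ∧ p.2 ≤ y then μ p.1 * μ p.2 else 0)) * (sV1 μ x * sV2 μ y) := by
            rw [hg]
        _ = ∑ p : (T1 × T2) × (T1 × T2),
              (if (p.1 ≤ x ∧ p.2 ≤ y) ∧ (y.1 ≤ x.1 ∧ x.2 ≤ y.2)
                then (μ p.1 * μ p.2) * (sV1 μ x * sV2 μ y) else 0) := by
            rw [Finset.sum_mul]
            refine Finset.sum_congr rfl fun p _ => ?_
            split_ifs <;> first | rfl | tauto | simp
    · rw [if_neg hR]
      exact (Finset.sum_eq_zero fun p _ => if_neg fun hc => hR hc.2).symm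
  calc ∑ x : T1 × T2, ∑ y : T1 × T2,
        (if y.1 ≤ x.1 ∧ x.2 ≤ y.2
          then (hIstar μ x * sV1 μ x) * (hIstar μ y * sV2 μ y) else 0)
      = ∑ q : (T1 × T2) × (T1 × T2), ∑ p : (T1 × T2) × (T1 × T2),
          (if (p.1 ≤ q.1 ∧ p.2 ≤ q.2) ∧ (q.2.1 ≤ q.1.1 ∧ q.1.2 ≤ q.2.2)
            then (μ p.1 * μ p.2) * (sV1 μ q.1 * sV2 μ q.2) else 0) := by
        rw [← pack2 fun x y => ∑ p : (T1 × T2) × (T1 × T2),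
          (if (p.1 ≤ x ∧ p.2 ≤ y) ∧ (y.1 ≤ x.1 ∧ x.2 ≤ y.2)
            then (μ p.1 * μ p.2) * (sV1 μ x * sV2 μ y) else 0)]
        exact Finset.sum_congr rfl fun x _ => Finset.sum_congr rfl fun y _ => hpt x y
    _ = ∑ p : (T1 × T2) × (T1 × T2), ∑ q : (T1 × T2) × (T1 × T2),
          (if (p.1 ≤ q.1 ∧ p.2 ≤ q.2) ∧ (q.2.1 ≤ q.1.1 ∧ q.1.2 ≤ q.2.2)
            then (μ p.1 * μ p.2) * (sV1 μ q.1 * sV2 μ q.2) else 0) := Finset.sum_comm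
    _ ≤ ∑ p : (T1 × T2) × (T1 × T2), μ p.1 * μ p.2
          * ((∑ c : T1, if p.1.1 ≤ c ∧ p.2.1 ≤ c then (1:ℝ) else 0)
            * (∑ d : T2, if p.1.2 ≤ d ∧ p.2.2 ≤ d then (1:ℝ) else 0)) := by
        refine Finset.sum_le_sum fun p _ => ?_
        rcases eq_or_ne (μ p.1) 0 with h0 | h0
        · refine le_trans (le_of_eq (Finset.sum_eq_zero fun q _ => ?_))
            (by simp [h0])
          split_ifs <;> simp [h0]
        rcases eq_or_ne (μ p.2) 0 with h0' | h0'
        · refine le_trans (le_of_eq (Finset.sum_eq_zero fun q _ => ?_))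
            (by simp [h0'])
          split_ifs <;> simp [h0']
        have hfac : ∑ q : (T1 × T2) × (T1 × T2),
            (if (p.1 ≤ q.1 ∧ p.2 ≤ q.2) ∧ (q.2.1 ≤ q.1.1 ∧ q.1.2 ≤ q.2.2)
              then (μ p.1 * μ p.2) * (sV1 μ q.1 * sV2 μ q.2) else 0)
            = μ p.1 * μ p.2 * ∑ u : T1 × T2, ∑ w : T1 × T2,
              (if (p.1 ≤ u ∧ p.2 ≤ w) ∧ w.1 ≤ u.1 ∧ u.2 ≤ w.2
                then sV1 μ u * sV2 μ w else 0) := by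
          rw [pack2 fun u w => (if (p.1 ≤ u ∧ p.2 ≤ w) ∧ w.1 ≤ u.1 ∧ u.2 ≤ w.2
                then sV1 μ u * sV2 μ w else 0), Finset.mul_sum]
          exact Finset.sum_congr rfl fun q _ => by split_ifs <;> simp
        rw [hfac]
        exact mul_le_mul_of_nonneg_left (K_le_N hμ hpot h0 h0')
          (mul_nonneg (hμ p.1) (hμ p.2))
    _ = ∑ z : T1 × T2, hIstar μ z ^ 2 := E_id



lemma P_le_4E (ht1 : IsTreeOrder T1) (ht2 : IsTreeOrder T2) (hμ : ∀ a, 0 ≤ μ a)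
    (hpot : ∀ a, μ a ≠ 0 → hI (hIstar μ) a ≤ 1) :
    ∑ β : T1 × T2, (sV1 μ β * sV2 μ β) ^ 2 ≤ 4 * ∑ z : T1 × T2, hIstar μ z ^ 2 := by
  have hpt : ∀ β : T1 × T2, (sV1 μ β * sV2 μ β) ^ 2
      ≤ 4 * ((∑ c : T1, if β.1 ≤ c then hIstar μ (c, β.2) * sV1 μ (c, β.2) else 0)
            * (∑ d : T2, if β.2 ≤ d then hIstar μ (β.1, d) * sV2 μ (β.1, d) else 0)) := by
    intro β
    have e1 : (sV1 μ β) ^ 2 ≤ 2 * ∑ c : T1,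
        (if β.1 ≤ c then hIstar μ (c, β.2) * sV1 μ (c, β.2) else 0) :=
      tele ht1 (fun c => hIstar μ (c, β.2)) (fun c => hIstar_nonneg hμ _) β.1
    have e2 : (sV2 μ β) ^ 2 ≤ 2 * ∑ d : T2,
        (if β.2 ≤ d then hIstar μ (β.1, d) * sV2 μ (β.1, d) else 0) :=
      tele ht2 (fun d => hIstar μ (β.1, d)) (fun d => hIstar_nonneg hμ _) β.2
    have h0 : (0:ℝ) ≤ 2 * ∑ d : T2,
        (if β.2 ≤ d then hIstar μ (β.1, d) * sV2 μ (β.1, d) else 0) :=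
      le_trans (sq_nonneg _) e2
    calc (sV1 μ β * sV2 μ β) ^ 2 = (sV1 μ β) ^ 2 * (sV2 μ β) ^ 2 := by ring
      _ ≤ (2 * ∑ c : T1, (if β.1 ≤ c then hIstar μ (c, β.2) * sV1 μ (c, β.2) else 0))
          * (2 * ∑ d : T2, (if β.2 ≤ d then hIstar μ (β.1, d) * sV2 μ (β.1, d) else 0)) :=
        mul_le_mul e1 e2 (sq_nonneg _) (le_trans (sq_nonneg _) e1)
      _ = 4 * ((∑ c : T1, if β.1 ≤ c then hIstar μ (c, β.2) * sV1 μ (c, β.2) else 0)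
            * (∑ d : T2, if β.2 ≤ d then hIstar μ (β.1, d) * sV2 μ (β.1, d) else 0)) := by
        ring
  have hhook : ∑ β : T1 × T2,
      ((∑ c : T1, if β.1 ≤ c then hIstar μ (c, β.2) * sV1 μ (c, β.2) else 0)
        * (∑ d : T2, if β.2 ≤ d then hIstar μ (β.1, d) * sV2 μ (β.1, d) else 0))
      = ∑ x : T1 × T2, ∑ y : T1 × T2,
          (if y.1 ≤ x.1 ∧ x.2 ≤ y.2
            then (hIstar μ x * sV1 μ x) * (hIstar μ y * sV2 μ y) else 0) := by
    refine Eq.trans (Finset.sum_congr rfl fun β _ => ?_)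
      ((hook_expand (fun u => hIstar μ u * sV1 μ u) (fun w => hIstar μ w * sV2 μ w)
        (fun _ => True)).trans
        (Finset.sum_congr rfl fun x _ => Finset.sum_congr rfl fun y _ => ?_))
    · rw [if_pos trivial]
    · split_ifs <;> first | rfl | tauto
  calc ∑ β : T1 × T2, (sV1 μ β * sV2 μ β) ^ 2
      ≤ ∑ β : T1 × T2,
          4 * ((∑ c : T1, if β.1 ≤ c then hIstar μ (c, β.2) * sV1 μ (c, β.2) else 0)
            * (∑ d : T2, if β.2 ≤ d then hIstar μ (β.1, d) * sV2 μ (β.1, d) else 0)) :=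
        Finset.sum_le_sum fun β _ => hpt β
    _ = 4 * ∑ β : T1 × T2,
          ((∑ c : T1, if β.1 ≤ c then hIstar μ (c, β.2) * sV1 μ (c, β.2) else 0)
            * (∑ d : T2, if β.2 ≤ d then hIstar μ (β.1, d) * sV2 μ (β.1, d) else 0)) := by
        rw [Finset.mul_sum]
    _ = 4 * ∑ x : T1 × T2, ∑ y : T1 × T2,
          (if y.1 ≤ x.1 ∧ x.2 ≤ y.2
            then (hIstar μ x * sV1 μ x) * (hIstar μ y * sV2 μ y) else 0) := by
        rw [hhook]
    _ ≤ 4 * ∑ z : T1 × T2, hIstar μ z ^ 2 :=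
        mul_le_mul_of_nonneg_left (Q_le_E hμ hpot) (by norm_num)



lemma hI_const_mul {T : Type*} [Fintype T] [PartialOrder T] (c : ℝ) (f : T → ℝ) (a : T) :
    hI (fun b => c * f b) a = c * hI f a := by
  rw [hI, hI, Finset.mul_sum]
  exact Finset.sum_congr rfl fun b _ => by split_ifs <;> simp

end Aux


theorem stmt15 :
    ∃ C : ℝ, 0 < C ∧
      ∀ (T1 T2 : Type) [Fintype T1] [PartialOrder T1] [Fintype T2] [PartialOrder T2],
        IsTreeOrder T1 → IsTreeOrder T2 →
        ∀ μ : T1 × T2 → ℝ, (∀ a, 0 ≤ μ a) →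
        (∀ a, μ a ≠ 0 → hI (hIstar μ) a ≤ 1) →
        ∀ lam : ℝ, 1 ≤ lam →
        sInf { c : ℝ | ∃ φ : T1 × T2 → ℝ, (∀ a, 0 ≤ φ a) ∧
            (∀ a, lam < hI (hIstar μ) a → 1 ≤ hI φ a) ∧ c = ∑ a, φ a ^ 2 }
          ≤ C * (∑ a, hIstar μ a ^ 2) / lam ^ 4 := by
  refine ⟨64, by norm_num, ?_⟩
  intro T1 T2 _ _ _ _ ht1 ht2 μ hμ hpot lam hlam
  have hlam0 : (0:ℝ) < lam := lt_of_lt_of_le one_pos hlam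
  have hE0 : (0:ℝ) ≤ ∑ a : T1 × T2, hIstar μ a ^ 2 :=
    Finset.sum_nonneg fun a _ => sq_nonneg _
  have hbdd : BddBelow { c : ℝ | ∃ φ : T1 × T2 → ℝ, (∀ a, 0 ≤ φ a) ∧
      (∀ a, lam < hI (hIstar μ) a → 1 ≤ hI φ a) ∧ c = ∑ a, φ a ^ 2 } := by
    refine ⟨0, fun c hc => ?_⟩
    obtain ⟨φ, -, -, rfl⟩ := hc
    exact Finset.sum_nonneg fun a _ => sq_nonneg _
  by_cases hc4 : (4:ℝ) ≤ lam
  · -- main case : witness (4/λ²)·V₁V₂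
    have hφ0 : ∀ a : T1 × T2, 0 ≤ (4 / lam ^ 2) * (sV1 μ a * sV2 μ a) := fun a =>
      mul_nonneg (by positivity) (mul_nonneg (sV1_nonneg hμ a) (sV2_nonneg hμ a))
    have hcond : ∀ a : T1 × T2, lam < hI (hIstar μ) a →
        1 ≤ hI (fun b => (4 / lam ^ 2) * (sV1 μ b * sV2 μ b)) a := by
      intro a hVa
      have hVa0 : 0 ≤ hI (hIstar μ) a := hI_nonneg (hIstar_nonneg hμ) a
      have hlow := lower_bound ht1 ht2 hμ hpot a
      have hstep : lam ^ 2 / 4 ≤ ∑ β, (if a ≤ β then sV1 μ β * sV2 μ β else 0) := by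
        nlinarith
      have hbridge : hI (fun b => sV1 μ b * sV2 μ b) a
          = ∑ β, (if a ≤ β then sV1 μ β * sV2 μ β else 0) := by
        rw [hI]; exact Finset.sum_congr rfl fun b _ => by split_ifs <;> rfl
      have hIφ : hI (fun b => (4 / lam ^ 2) * (sV1 μ b * sV2 μ b)) a
          = (4 / lam ^ 2) * ∑ β, (if a ≤ β then sV1 μ β * sV2 μ β else 0) := by
        rw [hI_const_mul, hbridge]
      rw [hIφ]
      have h2 : (4 / lam ^ 2) * (lam ^ 2 / 4) = 1 := by field_simp
      calc (1:ℝ) = (4 / lam ^ 2) * (lam ^ 2 / 4) := h2.symm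
        _ ≤ (4 / lam ^ 2) * ∑ β, (if a ≤ β then sV1 μ β * sV2 μ β else 0) :=
          mul_le_mul_of_nonneg_left hstep (by positivity)
    refine le_trans (csInf_le hbdd ⟨fun b => (4 / lam ^ 2) * (sV1 μ b * sV2 μ b),
      hφ0, hcond, rfl⟩) ?_
    have hcost : ∑ a : T1 × T2, ((4 / lam ^ 2) * (sV1 μ a * sV2 μ a)) ^ 2
        = (4 / lam ^ 2) ^ 2 * ∑ β : T1 × T2, (sV1 μ β * sV2 μ β) ^ 2 := by
      rw [Finset.mul_sum]
      exact Finset.sum_congr rfl fun a _ => by ring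
    rw [hcost]
    have hP := P_le_4E ht1 ht2 hμ hpot
    calc (4 / lam ^ 2) ^ 2 * ∑ β : T1 × T2, (sV1 μ β * sV2 μ β) ^ 2
        ≤ (4 / lam ^ 2) ^ 2 * (4 * ∑ z : T1 × T2, hIstar μ z ^ 2) :=
          mul_le_mul_of_nonneg_left hP (by positivity)
      _ = 64 * (∑ a : T1 × T2, hIstar μ a ^ 2) / lam ^ 4 := by
          field_simp
          ring
  · -- easy case 1 ≤ λ < 4 : witness g/λ
    push_neg at hc4
    have hφ0 : ∀ a : T1 × T2, 0 ≤ (1 / lam) * hIstar μ a := fun a =>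
      mul_nonneg (by positivity) (hIstar_nonneg hμ a)
    have hcond : ∀ a : T1 × T2, lam < hI (hIstar μ) a →
        1 ≤ hI (fun b => (1 / lam) * hIstar μ b) a := by
      intro a hVa
      rw [hI_const_mul]
      have h2 : (1 / lam) * lam = 1 := by field_simp
      calc (1:ℝ) = (1 / lam) * lam := h2.symm
        _ ≤ (1 / lam) * hI (hIstar μ) a :=
          mul_le_mul_of_nonneg_left (le_of_lt hVa) (by positivity)
    refine le_trans (csInf_le hbdd ⟨fun b => (1 / lam) * hIstar μ b, hφ0, hcond, rfl⟩) ?_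
    have hcost : ∑ a : T1 × T2, ((1 / lam) * hIstar μ a) ^ 2
        = (1 / lam) ^ 2 * ∑ a : T1 × T2, hIstar μ a ^ 2 := by
      rw [Finset.mul_sum]
      exact Finset.sum_congr rfl fun a _ => by ring
    rw [hcost, le_div_iff₀ (by positivity : (0:ℝ) < lam ^ 4)]
    have hl2 : lam ^ 2 ≤ 16 := by nlinarith
    have hexp : (1 / lam) ^ 2 * (∑ a : T1 × T2, hIstar μ a ^ 2) * lam ^ 4
        = (∑ a : T1 × T2, hIstar μ a ^ 2) * lam ^ 2 := by
      field_simp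
    rw [hexp]
    nlinarith
end

section
/- Let $T^n$ be an $n$-tree with weight $w \geq 0$ satisfying the surrogate maximum principle with parameters $\kappa \in (0,1]$, $C$. Let $\nu : T^n \to [0,\infty)$ be nonzero, and define $E := \{ \alpha : \mathbf{V}^\nu(\alpha) > (2C')^{-1/\kappa'} \mathcal{E}[\nu] / |\nu| \}$, where $C', \kappa'$ are the constants in the diagonal estimate $\sum \mathbf{V}^\mu_\delta \, \mu \leq C' (\delta |\mu|)^{\kappa'} \mathcal{E}[\mu]^{1-\kappa'}$ with $\kappa' = \frac{2\kappa}{1+\kappa}$, $C' = C^{2/(1+\kappa)}$. Then $\mathcal{E}_E[\nu] := \sum_{\alpha \in E} w(\alpha) (\mathbf{I}^*\nu(\alpha))^2 \geq \tfrac{1}{2} \mathcal{E}[\nu]$. -/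
open Finset
open scoped Classical

lemma adj_sum {X : Type*} [Fintype X] [PartialOrder X] (g f : X → ℝ) :
    ∑ a, hI g a * f a = ∑ b, g b * hIstar f b := by
  simp only [hI, hIstar, Finset.sum_mul, Finset.mul_sum]
  rw [Finset.sum_comm]
  refine Finset.sum_congr rfl fun b _ => Finset.sum_congr rfl fun a _ => ?_
  by_cases h : a ≤ b <;> simp [h]

lemma half_bound (κ C E S M : ℝ) (hκ0 : 0 < κ) (hκ1 : κ ≤ 1) (hC : 0 < C)
    (hE : 0 < E) (hM : 0 < M) (hS : 0 ≤ S)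
    (h : S ≤ C * (((2 * C ^ ((2 : ℝ) / (1 + κ))) ^ (-(1 : ℝ) / (2 * κ / (1 + κ))) * E / M) * M) ^ κ *
      ((S * E) ^ ((1 - κ) / 2))) : S ≤ E / 2 := by
  rcases hS.eq_or_lt with hS0 | hSpos
  · rw [← hS0]; positivity
  have h1κ : (0 : ℝ) < 1 + κ := by linarith
  have hκ' : (0 : ℝ) < 2 * κ / (1 + κ) := by positivity
  have hC' : (0 : ℝ) < C ^ ((2 : ℝ) / (1 + κ)) := Real.rpow_pos_of_pos hC _
  have ht : (0 : ℝ) < 2 * C ^ ((2 : ℝ) / (1 + κ)) := by positivity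
  set p := (1 + κ) / 2 with hp
  set q := (1 - κ) / 2 with hq
  have hppos : 0 < p := by rw [hp]; positivity
  have hδM : ((2 * C ^ ((2 : ℝ) / (1 + κ))) ^ (-(1 : ℝ) / (2 * κ / (1 + κ))) * E / M) * M
      = (2 * C ^ ((2 : ℝ) / (1 + κ))) ^ (-(1 : ℝ) / (2 * κ / (1 + κ))) * E := by
    field_simp
  rw [hδM] at h
  have hexp1 : (-(1 : ℝ) / (2 * κ / (1 + κ))) * κ = -p := by
    rw [hp]; field_simp
  have hexp2 : ((2 : ℝ) / (1 + κ)) * (-p) = -1 := by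
    rw [hp]; field_simp
  have hpre : C * ((2 * C ^ ((2 : ℝ) / (1 + κ))) ^ (-(1 : ℝ) / (2 * κ / (1 + κ))) * E) ^ κ
      = (2 : ℝ) ^ (-p) * E ^ κ := by
    rw [Real.mul_rpow (by positivity) hE.le, ← Real.rpow_mul ht.le, hexp1,
      Real.mul_rpow (by norm_num) hC'.le, ← Real.rpow_mul hC.le, hexp2, Real.rpow_neg_one]
    field_simp
  rw [hpre, Real.mul_rpow hS hE.le] at h
  have hEE : E ^ κ * E ^ q = E ^ p := by
    rw [← Real.rpow_add hE]; congr 1; rw [hp, hq]; ring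
  have hform : (2 : ℝ) ^ (-p) * E ^ κ * (S ^ q * E ^ q) = (E / 2) ^ p * S ^ q := by
    calc (2 : ℝ) ^ (-p) * E ^ κ * (S ^ q * E ^ q)
        = (2 : ℝ) ^ (-p) * (E ^ κ * E ^ q) * S ^ q := by ring
      _ = (2 : ℝ) ^ (-p) * E ^ p * S ^ q := by rw [hEE]
      _ = (E / 2) ^ p * S ^ q := by
          rw [Real.div_rpow hE.le (by norm_num), Real.rpow_neg (by norm_num : (0:ℝ) ≤ 2)]
          ring
  rw [hform] at h
  have hSplit : S = S ^ p * S ^ q := by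
    rw [← Real.rpow_add hSpos]
    have hpq : p + q = 1 := by rw [hp, hq]; ring
    rw [hpq, Real.rpow_one]
  nth_rewrite 1 [hSplit] at h
  have hSq : 0 < S ^ q := Real.rpow_pos_of_pos hSpos q
  have hle : S ^ p ≤ (E / 2) ^ p := (mul_le_mul_iff_of_pos_right hSq).mp h
  by_contra hcon
  push_neg at hcon
  exact absurd hle (not_le.mpr (Real.rpow_lt_rpow (by positivity) hcon hppos))

theorem stmt19 {n : ℕ} {T : Fin n → Type*}
    [∀ i, Fintype (T i)] [∀ i, PartialOrder (T i)]
    (htree : ∀ i, IsTreeOrder (T i)) (κ C : ℝ) (hκ0 : 0 < κ) (hκ1 : κ ≤ 1) (hC : 0 ≤ C)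
    (w : (∀ i, T i) → ℝ) (hw : ∀ a, 0 ≤ w a)
    -- surrogate maximum principle for the weight `w` with parameters `κ, C`
    (hSMP : ∀ (μ ρ : (∀ i, T i) → ℝ), (∀ a, 0 ≤ μ a) → (∀ a, 0 ≤ ρ a) →
      ∀ δ : ℝ, 0 < δ →
      ∑ a, hI (fun x =>
          (if hI (fun y => w y * hIstar μ y) x ≤ δ then 1 else 0) *
            (w x * hIstar μ x)) a * ρ a
        ≤ C * (δ * ∑ a, ρ a) ^ κ *
          ((∑ a, (if hI (fun y => w y * hIstar μ y) a ≤ δ then 1 else 0) *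
              (w a * hIstar μ a ^ 2)) *
            (∑ a, w a * hIstar ρ a ^ 2)) ^ ((1 - κ) / 2))
    (ν : (∀ i, T i) → ℝ) (hν : ∀ a, 0 ≤ ν a) (hν0 : ν ≠ 0) :
    (1 / 2 : ℝ) * (∑ a, w a * hIstar ν a ^ 2) ≤
      ∑ a, if (2 * C ^ ((2 : ℝ) / (1 + κ))) ^ (-(1 : ℝ) / (2 * κ / (1 + κ))) *
            (∑ b, w b * hIstar ν b ^ 2) / (∑ b, ν b)
          < hI (fun x => w x * hIstar ν x) a
        then w a * hIstar ν a ^ 2 else 0 := by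
  classical
  have hIsnn : ∀ b : (∀ i, T i), 0 ≤ hIstar ν b := fun b =>
    Finset.sum_nonneg fun a _ => by by_cases h : a ≤ b <;> simp [h, hν a]
  have hterm : ∀ a : (∀ i, T i), 0 ≤ w a * hIstar ν a ^ 2 := fun a =>
    mul_nonneg (hw a) (sq_nonneg _)
  have hVnn : ∀ a : (∀ i, T i), 0 ≤ hI (fun x => w x * hIstar ν x) a := fun a =>
    Finset.sum_nonneg fun b _ => by
      by_cases h : a ≤ b <;> simp [h, mul_nonneg (hw b) (hIsnn b)]
  set E := ∑ a : (∀ i, T i), w a * hIstar ν a ^ 2 with hEdef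
  set M := ∑ a : (∀ i, T i), ν a with hMdef
  have hE0 : 0 ≤ E := Finset.sum_nonneg fun a _ => hterm a
  rcases hE0.eq_or_lt with hE' | hEpos
  · rw [← hE', mul_zero]
    refine Finset.sum_nonneg fun a _ => ?_
    split
    · exact hterm a
    · exact le_rfl
  have hMpos : 0 < M := by
    obtain ⟨a, ha⟩ : ∃ a, ν a ≠ 0 := by
      by_contra hcon; push_neg at hcon; exact hν0 (funext hcon)
    exact Finset.sum_pos' (fun i _ => hν i)
      ⟨a, Finset.mem_univ a, (hν a).lt_of_ne (Ne.symm ha)⟩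
  -- C must be positive
  have hCpos : 0 < C := by
    rcases hC.eq_or_lt with h0 | h
    · exfalso
      set δ0 := (∑ a : (∀ i, T i), hI (fun x => w x * hIstar ν x) a) + 1 with hδ0def
      have hsum0 : 0 ≤ ∑ a : (∀ i, T i), hI (fun x => w x * hIstar ν x) a :=
        Finset.sum_nonneg fun a _ => hVnn a
      have hδ0 : 0 < δ0 := by rw [hδ0def]; linarith
      have hle : ∀ a : (∀ i, T i), hI (fun x => w x * hIstar ν x) a ≤ δ0 := fun a => by
        have h1 := Finset.single_le_sum (fun b (_ : b ∈ Finset.univ) => hVnn b)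
          (Finset.mem_univ a)
        rw [hδ0def]; linarith
      have hsmp := hSMP ν ν hν hν δ0 hδ0
      rw [adj_sum] at hsmp
      rw [← h0] at hsmp
      have heq : ∑ b, (fun x =>
          (if hI (fun y => w y * hIstar ν y) x ≤ δ0 then (1:ℝ) else 0) *
            (w x * hIstar ν x)) b * hIstar ν b = E := by
        rw [hEdef]
        refine Finset.sum_congr rfl fun b _ => ?_
        simp only [if_pos (hle b), one_mul]
        ring
      rw [heq] at hsmp
      simp only [zero_mul] at hsmp
      linarith
    · exact h
  -- the truncation parameter
  have hδpos : 0 < (2 * C ^ ((2 : ℝ) / (1 + κ))) ^ (-(1 : ℝ) / (2 * κ / (1 + κ))) * E / M := by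
    have h1κ : (0 : ℝ) < 1 + κ := by linarith
    have h2C : (0 : ℝ) < 2 * C ^ ((2 : ℝ) / (1 + κ)) := by positivity
    have := Real.rpow_pos_of_pos h2C (-(1 : ℝ) / (2 * κ / (1 + κ)))
    positivity
  have hsmp := hSMP ν ν hν hν
    ((2 * C ^ ((2 : ℝ) / (1 + κ))) ^ (-(1 : ℝ) / (2 * κ / (1 + κ))) * E / M) hδpos
  rw [adj_sum] at hsmp
  rw [← hMdef, ← hEdef] at hsmp
  have heq : ∑ b, (fun x =>
      (if hI (fun y => w y * hIstar ν y) x ≤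
          (2 * C ^ ((2 : ℝ) / (1 + κ))) ^ (-(1 : ℝ) / (2 * κ / (1 + κ))) * E / M
        then (1:ℝ) else 0) * (w x * hIstar ν x)) b * hIstar ν b =
      ∑ a, (if hI (fun y => w y * hIstar ν y) a ≤
          (2 * C ^ ((2 : ℝ) / (1 + κ))) ^ (-(1 : ℝ) / (2 * κ / (1 + κ))) * E / M
        then (1:ℝ) else 0) * (w a * hIstar ν a ^ 2) := by
    refine Finset.sum_congr rfl fun b _ => ?_
    by_cases h : hI (fun y => w y * hIstar ν y) b ≤
        (2 * C ^ ((2 : ℝ) / (1 + κ))) ^ (-(1 : ℝ) / (2 * κ / (1 + κ))) * E / M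
    · simp only [if_pos h, one_mul]; ring
    · simp only [if_neg h, zero_mul]
  rw [heq] at hsmp
  set S := ∑ a, (if hI (fun y => w y * hIstar ν y) a ≤
      (2 * C ^ ((2 : ℝ) / (1 + κ))) ^ (-(1 : ℝ) / (2 * κ / (1 + κ))) * E / M
    then (1:ℝ) else 0) * (w a * hIstar ν a ^ 2) with hSdef
  have hSnn : 0 ≤ S := by
    rw [hSdef]
    refine Finset.sum_nonneg fun a _ => ?_
    by_cases h : hI (fun y => w y * hIstar ν y) a ≤
        (2 * C ^ ((2 : ℝ) / (1 + κ))) ^ (-(1 : ℝ) / (2 * κ / (1 + κ))) * E / M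
    · simp only [if_pos h, one_mul]; exact hterm a
    · simp only [if_neg h, zero_mul]; exact le_rfl
  have hhalf : S ≤ E / 2 :=
    half_bound κ C E S M hκ0 hκ1 hCpos hEpos hMpos hSnn hsmp
  have hsplit : E = (∑ a, if (2 * C ^ ((2 : ℝ) / (1 + κ))) ^ (-(1 : ℝ) / (2 * κ / (1 + κ))) *
        E / M < hI (fun x => w x * hIstar ν x) a
      then w a * hIstar ν a ^ 2 else 0) + S := by
    rw [hEdef, hSdef, ← Finset.sum_add_distrib]
    refine Finset.sum_congr rfl fun a _ => ?_
    by_cases h : (2 * C ^ ((2 : ℝ) / (1 + κ))) ^ (-(1 : ℝ) / (2 * κ / (1 + κ))) * E / M <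
        hI (fun x => w x * hIstar ν x) a
    · rw [if_pos h, if_neg (not_le.mpr h)]; ring
    · rw [if_neg h, if_pos (not_lt.mp h)]; ring
  linarith [hsplit]
end
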